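/- arXiv:2002.01187 — 6 statements merged into one kernel-verified Lean document; each statement's English description precedes it below -/
import Mathlib

section
/- Let n, m be positive integers, 0 < λ < n, 1 < p < ∞, and D an n×m real matrix with rank(D) < m. If f ∈ L^p(ℝ^n) is nonnegative, not almost everywhere zero, then the function x ↦ ∫_{ℝ^n} f(y)/|Dx − y|^λ dy on ℝ^m is not in L^q(ℝ^m) for any 0 < q < ∞. -/
open MeasureTheory ENNReal

abbrev E (n : ℕ) : Type := EuclideanSpace ℝ (Fin n)

noncomputable def mvec {n m : ℕ} (D : Matrix (Fin n) (Fin m) ℝ) (x : E m) : E n :=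
  (WithLp.equiv 2 (Fin n → ℝ)).symm (D.mulVec ((WithLp.equiv 2 (Fin m → ℝ)) x))

noncomputable def mvecL {n m : ℕ} (D : Matrix (Fin n) (Fin m) ℝ) : E m →L[ℝ] E n :=
  LinearMap.toContinuousLinearMap <|
    ((EuclideanSpace.equiv (Fin n) ℝ).symm.toLinearMap.comp
      (D.mulVecLin.comp (EuclideanSpace.equiv (Fin m) ℝ).toLinearMap))

lemma mvecL_apply {n m : ℕ} (D : Matrix (Fin n) (Fin m) ℝ) (x : E m) :
    mvecL D x = mvec D x := rfl

/-- Since `rank D < m`, the kernel of `D` contains a unit vector. -/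
lemma exists_unit_ker {n m : ℕ} (D : Matrix (Fin n) (Fin m) ℝ) (hrank : D.rank < m) :
    ∃ u : E m, ‖u‖ = 1 ∧ mvecL D u = 0 := by
  have h1 : Module.finrank ℝ (LinearMap.range D.mulVecLin) +
      Module.finrank ℝ (LinearMap.ker D.mulVecLin) = m := by
    simpa using LinearMap.finrank_range_add_finrank_ker D.mulVecLin
  have hr : D.rank = Module.finrank ℝ (LinearMap.range D.mulVecLin) := rfl
  have hker : LinearMap.ker D.mulVecLin ≠ ⊥ := by
    intro h
    rw [h] at h1
    simp [finrank_bot] at h1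
    omega
  obtain ⟨v, hv, hv0⟩ := Submodule.exists_mem_ne_zero_of_ne_bot hker
  set w : E m := (WithLp.equiv 2 (Fin m → ℝ)).symm v with hw
  have hw0 : w ≠ 0 := by simpa [hw] using hv0
  have hDw : mvecL D w = 0 := by
    have hmv : D.mulVec v = 0 := hv
    simp [mvecL, mvec, hw, Matrix.mulVecLin_apply, hmv]
    exact hmv
  refine ⟨(‖w‖ : ℝ)⁻¹ • w, norm_smul_inv_norm (𝕜 := ℝ) hw0, ?_⟩
  rw [_root_.map_smul, hDw, smul_zero]

/-- A measurable set containing a disjoint family of balls along a line has infinite volume. -/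
lemma tube_volume {m : ℕ} (u : E m) (hu : ‖u‖ = 1) (δ : ℝ) (hδ : 0 < δ)
    (S : Set (E m))
    (h : ∀ k : ℕ, Metric.ball ((3 * δ * k) • u) δ ⊆ S) : volume S = ⊤ := by
  have hdisj : Pairwise (Function.onFun Disjoint
      fun k : ℕ => Metric.ball ((3 * δ * k) • u) δ) := by
    intro i j hij
    apply Metric.ball_disjoint_ball
    have hd : dist ((3 * δ * i) • u) ((3 * δ * j) • u) = |3 * δ * i - 3 * δ * j| := by
      rw [dist_eq_norm, ← sub_smul, norm_smul, hu, mul_one, Real.norm_eq_abs]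
    have h1 : (1 : ℝ) ≤ |(i : ℝ) - j| := by
      have hz : ((i : ℤ) - j) ≠ 0 := by
        intro hc; apply hij; omega
      have := Int.one_le_abs hz
      have : (1 : ℝ) ≤ |((i : ℤ) - j : ℤ)| := by exact_mod_cast this
      rwa [Int.cast_abs, Int.cast_sub, Int.cast_natCast, Int.cast_natCast] at this
    rw [hd, show (3*δ*i - 3*δ*j : ℝ) = 3*δ*((i:ℝ)-j) by ring, abs_mul,
      abs_of_pos (show (0:ℝ) < 3*δ by linarith)]
    nlinarith
  have hU : volume (⋃ k : ℕ, Metric.ball ((3 * δ * k) • u) δ) = ⊤ := by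
    rw [measure_iUnion hdisj fun k => measurableSet_ball]
    have heq : ∀ k : ℕ, volume (Metric.ball ((3 * δ * k) • u) δ) =
        volume (Metric.ball (0 : E m) δ) :=
      fun k => Measure.addHaar_ball_center volume _ δ
    simp_rw [heq]
    exact ENNReal.tsum_const_eq_top_of_ne_zero (Metric.measure_ball_pos volume 0 hδ).ne'
  exact top_le_iff.mp (hU ▸ measure_mono (Set.iUnion_subset h))

/-- The tube `{x : ‖Dx‖ ≤ 1}` has infinite volume when `rank D < m`. -/
lemma tube_volume_top {n m : ℕ} (D : Matrix (Fin n) (Fin m) ℝ) (hrank : D.rank < m) :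
    volume {x : E m | ‖mvec D x‖ ≤ 1} = ⊤ := by
  obtain ⟨u, hu1, hu0⟩ := exists_unit_ker D hrank
  set N : ℝ := ‖mvecL D‖ with hN
  have hN0 : 0 ≤ N := norm_nonneg _
  set δ : ℝ := (N + 1)⁻¹ with hδdef
  have hδ : 0 < δ := by positivity
  apply tube_volume u hu1 δ hδ
  intro k x hx
  have hc : mvecL D ((3 * δ * k) • u) = 0 := by
    rw [_root_.map_smul, hu0, smul_zero]
  have hxc : mvecL D x = mvecL D (x - (3 * δ * k) • u) := by
    rw [map_sub, hc, sub_zero]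
  have hxd : ‖x - (3 * δ * k) • u‖ < δ := by
    rwa [← dist_eq_norm, ← Metric.mem_ball]
  have hle : ‖mvecL D x‖ ≤ N * δ := by
    rw [hxc]
    calc ‖mvecL D (x - (3 * δ * k) • u)‖ ≤ N * ‖x - (3 * δ * k) • u‖ :=
          (mvecL D).le_opNorm _
      _ ≤ N * δ := by nlinarith
  have hNδ : N * δ ≤ 1 := by
    have : δ * (N + 1) = 1 := inv_mul_cancel₀ (by positivity)
    nlinarith
  simp only [Set.mem_setOf_eq, ← mvecL_apply]
  linarith

/-- If `rank D < m`, `0 < λ < n`, `1 < p < ∞`, and `f ∈ L^p(ℝ^n)` is nonnegative and not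
a.e. zero, then `x ↦ ∫ f(y)/|Dx − y|^λ dy` is not in `L^q(ℝ^m)` for any `0 < q < ∞`. -/
theorem stmt2 (n m : ℕ) (hn : 0 < n) (hm : 0 < m) (lam p q : ℝ)
    (hlam0 : 0 < lam) (hlamn : lam < n) (hp : 1 < p) (hq : 0 < q)
    (D : Matrix (Fin n) (Fin m) ℝ) (hrank : D.rank < m)
    (f : E n → ℝ) (hf : MemLp f (ENNReal.ofReal p) volume)
    (hpos : ∀ y, 0 ≤ f y) (hne : ¬ f =ᵐ[volume] 0) :
    ∫⁻ x : E m, (∫⁻ y : E n, ENNReal.ofReal (f y) *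
        ENNReal.ofReal (‖mvec D x - y‖ ^ (-lam)) ∂volume) ^ q ∂volume = ⊤ := by
  have hvolS : volume {x : E m | ‖mvec D x‖ ≤ 1} = ⊤ := tube_volume_top D hrank
  haveI : Nonempty (Fin n) := ⟨⟨0, hn⟩⟩
  haveI : Nontrivial (E n) := by infer_instance
  set F : E n → ℝ≥0∞ := fun y => ENNReal.ofReal (f y) with hF
  have hFmeas : AEMeasurable F volume :=
    ENNReal.measurable_ofReal.comp_aemeasurable hf.1.aemeasurable
  have htot : ∫⁻ y, F y ∂volume ≠ 0 := by
    intro h0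
    apply hne
    filter_upwards [(lintegral_eq_zero_iff' hFmeas).mp h0] with y hy
    have : f y ≤ 0 := ENNReal.ofReal_eq_zero.mp hy
    exact le_antisymm this (hpos y)
  obtain ⟨R, hR⟩ : ∃ R : ℕ, 0 < ∫⁻ y in Metric.ball (0 : E n) R, F y ∂volume := by
    by_contra hc
    push_neg at hc
    apply htot
    have hc' : ∀ k : ℕ, ∫⁻ y in Metric.ball (0 : E n) k, F y ∂volume = 0 :=
      fun k => le_antisymm (hc k) (zero_le)
    have h1 : ∫⁻ y, F y ∂volume = ∫⁻ y in ⋃ k : ℕ, Metric.ball (0 : E n) k, F y ∂volume := by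
      rw [Metric.iUnion_ball_nat, Measure.restrict_univ]
    rw [h1]
    refine le_antisymm ?_ (zero_le)
    calc ∫⁻ y in ⋃ k : ℕ, Metric.ball (0 : E n) k, F y ∂volume
        ≤ ∑' k : ℕ, ∫⁻ y in Metric.ball (0 : E n) k, F y ∂volume :=
          lintegral_iUnion_le _ _
      _ = 0 := by simp [hc']
  set c : ℝ≥0∞ := min (∫⁻ y in Metric.ball (0 : E n) R, F y ∂volume) 1 with hc
  have hc0 : 0 < c := lt_min hR one_pos
  have hctop : c ≠ ⊤ := ne_top_of_le_ne_top ENNReal.one_ne_top (min_le_right _ _)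
  set ε : ℝ≥0∞ := ENNReal.ofReal ((1 + R : ℝ) ^ (-lam)) * c with hε
  have hrpow : (0 : ℝ) < (1 + R : ℝ) ^ (-lam) :=
    Real.rpow_pos_of_pos (by positivity) _
  have hε0 : ε ≠ 0 := by
    apply mul_ne_zero
    · simpa [ENNReal.ofReal_eq_zero, not_le] using hrpow
    · exact hc0.ne'
  have hεtop : ε ≠ ⊤ := ENNReal.mul_ne_top ENNReal.ofReal_ne_top hctop
  have hb : ∀ x : E m, ‖mvec D x‖ ≤ 1 →
      ε ≤ ∫⁻ y, F y * ENNReal.ofReal (‖mvec D x - y‖ ^ (-lam)) ∂volume := by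
    intro x hx
    have hmono : ∫⁻ y in Metric.ball (0 : E n) R,
          F y * ENNReal.ofReal ((1 + R : ℝ) ^ (-lam)) ∂volume
        ≤ ∫⁻ y in Metric.ball (0 : E n) R,
          F y * ENNReal.ofReal (‖mvec D x - y‖ ^ (-lam)) ∂volume := by
      apply lintegral_mono_ae
      have h1 : ∀ᵐ y ∂(volume.restrict (Metric.ball (0 : E n) R)),
          y ∈ Metric.ball (0 : E n) R := ae_restrict_mem measurableSet_ball
      have h2' : ∀ᵐ y : E n ∂volume, y ≠ mvec D x := by
        rw [ae_iff]
        simp only [not_not]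
        rw [show {y : E n | y = mvec D x} = {mvec D x} from Set.setOf_eq_eq_singleton]
        exact measure_singleton _
      have h2 : ∀ᵐ y ∂(volume.restrict (Metric.ball (0 : E n) R)), y ≠ mvec D x :=
        ae_restrict_of_ae h2'
      filter_upwards [h1, h2] with y hy hy'
      apply mul_le_mul_right
      apply ENNReal.ofReal_le_ofReal
      apply Real.rpow_le_rpow_of_nonpos
      · rw [norm_pos_iff]
        exact sub_ne_zero.mpr (Ne.symm hy')
      · calc ‖mvec D x - y‖ ≤ ‖mvec D x‖ + ‖y‖ := norm_sub_le _ _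
          _ ≤ 1 + R := by
              have : ‖y‖ < R := by rwa [← mem_ball_zero_iff]
              linarith
      · linarith
    calc ε = ENNReal.ofReal ((1 + R : ℝ) ^ (-lam)) * c := hε
      _ ≤ ENNReal.ofReal ((1 + R : ℝ) ^ (-lam)) *
            ∫⁻ y in Metric.ball (0 : E n) R, F y ∂volume :=
          mul_le_mul_right (min_le_left _ _) _
      _ = (∫⁻ y in Metric.ball (0 : E n) R, F y ∂volume) *
            ENNReal.ofReal ((1 + R : ℝ) ^ (-lam)) := mul_comm _ _
      _ = ∫⁻ y in Metric.ball (0 : E n) R,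
            F y * ENNReal.ofReal ((1 + R : ℝ) ^ (-lam)) ∂volume :=
          (lintegral_mul_const' _ _ ENNReal.ofReal_ne_top).symm
      _ ≤ ∫⁻ y in Metric.ball (0 : E n) R,
            F y * ENNReal.ofReal (‖mvec D x - y‖ ^ (-lam)) ∂volume := hmono
      _ ≤ ∫⁻ y, F y * ENNReal.ofReal (‖mvec D x - y‖ ^ (-lam)) ∂volume :=
          setLIntegral_le_lintegral _ _
  set S : Set (E m) := {x : E m | ‖mvec D x‖ ≤ 1} with hS
  have hSmeas : MeasurableSet S := by
    have hcont : Continuous fun x : E m => ‖mvecL D x‖ := (mvecL D).continuous.norm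
    have : IsClosed {x : E m | ‖mvecL D x‖ ≤ 1} := isClosed_le hcont continuous_const
    simpa [hS, mvecL_apply] using this.measurableSet
  have hεq : (0 : ℝ≥0∞) < ε ^ q := ENNReal.rpow_pos (hε0.bot_lt) hεtop
  have key : ∫⁻ x, S.indicator (fun _ => ε ^ q) x ∂volume ≤
      ∫⁻ x : E m, (∫⁻ y : E n, ENNReal.ofReal (f y) *
        ENNReal.ofReal (‖mvec D x - y‖ ^ (-lam)) ∂volume) ^ q ∂volume := by
    apply lintegral_mono
    intro x
    by_cases hx : x ∈ S
    · rw [Set.indicator_of_mem hx]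
      exact ENNReal.rpow_le_rpow (hb x hx) hq.le
    · rw [Set.indicator_of_notMem hx]
      exact zero_le
  have hind : ∫⁻ x, S.indicator (fun _ => ε ^ q) x ∂volume = ⊤ := by
    rw [lintegral_indicator hSmeas, setLIntegral_const, hS, hvolS]
    exact ENNReal.mul_top hεq.ne'
  rw [hind] at key
  exact top_le_iff.mp key
end

section
/- Let n, m be positive integers, λ > 0, 0 < p, q ≤ ∞. If ‖∫_{ℝ^n} f(y)(|x| + |y|)^{−λ} dy‖_{L_x^q(ℝ^m)} ≲ ‖f‖_{L^p(ℝ^n)} holds for all f ∈ L^p, then λ = n/p' + m/q and 1 < p ≤ q < ∞. -/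
open MeasureTheory ENNReal

/-- The `L^q(ℝ^m)` norm (with exponent `q ∈ (0,∞]`) of an `ℝ≥0∞`-valued function. -/
noncomputable def qnorm {α : Type*} [MeasurableSpace α] (μ : Measure α) (q : ℝ≥0∞)
    (F : α → ℝ≥0∞) : ℝ≥0∞ :=
  if q = 0 then 0 else if q = ⊤ then essSup F μ
  else (∫⁻ x, F x ^ q.toReal ∂μ) ^ (1 / q.toReal)

open Set Metric


lemma E_nontrivial (k : ℕ) (hk : 0 < k) : Nontrivial (E k) := by
  have : 0 < Module.finrank ℝ (E k) := by
    rw [finrank_euclideanSpace_fin]; exact hk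
  exact Module.nontrivial_of_finrank_pos this

lemma lintegral_polar (k : ℕ) (hk : 0 < k) (g : ℝ → ℝ≥0∞) (hg : Measurable g) :
    ∫⁻ x : E k, g ‖x‖ = (k * volume (ball (0 : E k) 1)) *
      ∫⁻ r in Ioi (0 : ℝ), ENNReal.ofReal (r ^ (k - 1 : ℕ)) * g r := by
  haveI := E_nontrivial k hk
  have hdim : Module.finrank ℝ (E k) = k := finrank_euclideanSpace_fin
  have h0 : (volume : Measure (E k)).restrict ({(0 : E k)}ᶜ) = volume :=
    restrict_compl_singleton _
  calc ∫⁻ x : E k, g ‖x‖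
      = ∫⁻ x in ({(0 : E k)}ᶜ), g ‖x‖ := by rw [h0]
    _ = ∫⁻ x : ({(0 : E k)}ᶜ : Set (E k)), g ‖x.1‖ ∂((volume : Measure (E k)).comap (↑)) :=
        (lintegral_subtype_comap (measurableSet_singleton _).compl (fun x => g ‖x‖)).symm
    _ = ∫⁻ z : sphere (0 : E k) 1 × Ioi (0 : ℝ), g z.2.1
          ∂((volume : Measure (E k)).toSphere.prod
             (Measure.volumeIoiPow (Module.finrank ℝ (E k) - 1))) := by
        have := (Measure.measurePreserving_homeomorphUnitSphereProd
          (volume : Measure (E k))).lintegral_comp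
          (f := fun z : sphere (0 : E k) 1 × Ioi (0 : ℝ) => g z.2.1)
          (hg.comp (measurable_subtype_coe.comp measurable_snd))
        simp only [homeomorphUnitSphereProd_apply_snd_coe] at this
        exact this
    _ = (volume : Measure (E k)).toSphere univ *
          ∫⁻ r : Ioi (0 : ℝ), g r.1 ∂(Measure.volumeIoiPow (Module.finrank ℝ (E k) - 1)) := by
        refine (MeasureTheory.lintegral_prod (f := fun z : sphere (0 : E k) 1 × Ioi (0 : ℝ) =>
          g z.2.1) ((hg.comp (measurable_subtype_coe.comp
          measurable_snd)).aemeasurable)).trans ?_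
        simp [lintegral_const, mul_comm]
    _ = (k * volume (ball (0 : E k) 1)) *
          ∫⁻ r in Ioi (0 : ℝ), ENNReal.ofReal (r ^ (k - 1 : ℕ)) * g r := by
        rw [Measure.toSphere_apply_univ, hdim]
        congr 1
        rw [Measure.volumeIoiPow, lintegral_withDensity_eq_lintegral_mul _ (by fun_prop)
            (show Measurable fun r : Ioi (0:ℝ) => g r.1 from hg.comp measurable_subtype_coe)]
        simp only [Pi.mul_apply]
        rw [← lintegral_subtype_comap measurableSet_Ioi
            (fun r : ℝ => ENNReal.ofReal (r ^ (k - 1 : ℕ)) * g r)]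
-- finiteness/infinitude of set lintegral of ofReal vs IntegrableOn
lemma lint_lt_top_iff {f : ℝ → ℝ} {s : Set ℝ} (hs : MeasurableSet s) (hm : Measurable f)
    (h0 : ∀ r ∈ s, 0 ≤ f r) :
    (∫⁻ r in s, ENNReal.ofReal (f r)) < ⊤ ↔ IntegrableOn f s := by
  have hcongr : ∫⁻ r in s, ENNReal.ofReal (f r) = ∫⁻ r in s, (‖f r‖₊ : ℝ≥0∞) :=
    setLIntegral_congr_fun_ae hs (ae_of_all _ fun r hr => (Real.enorm_eq_ofReal (h0 r hr)).symm)
  rw [hcongr]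
  exact ⟨fun h => ⟨hm.aestronglyMeasurable, h⟩, fun h => h.2⟩

lemma lint_rpow_top {a c : ℝ} (ha : 0 < a) (hc : -1 ≤ c) :
    ∫⁻ r in Ioi a, ENNReal.ofReal (r ^ c) = ⊤ := by
  by_contra h
  have : IntegrableOn (fun r : ℝ => r ^ c) (Ioi a) := by
    rw [← lint_lt_top_iff measurableSet_Ioi (measurable_id'.pow_const _)
      (fun r hr => Real.rpow_nonneg (le_of_lt (ha.trans hr)) c)]
    exact lt_top_iff_ne_top.2 h
  rw [integrableOn_Ioi_rpow_iff ha] at this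
  linarith

lemma exp_image_Ioi (t : ℝ) : Real.exp '' (Ioi t) = Ioi (Real.exp t) := by
  ext x
  constructor
  · rintro ⟨u, hu, rfl⟩; exact Real.exp_lt_exp.2 hu
  · intro hx
    have hx0 : 0 < x := lt_trans (Real.exp_pos t) hx
    refine ⟨Real.log x, ?_, Real.exp_log hx0⟩
    rw [mem_Ioi, ← Real.exp_lt_exp, Real.exp_log hx0]
    exact hx

lemma log_integrableOn_iff (b : ℝ) :
    IntegrableOn (fun r : ℝ => r⁻¹ * (Real.log r) ^ (-b)) (Ioi 2) ↔ 1 < b := by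
  have himg : Real.exp '' (Ioi (Real.log 2)) = Ioi 2 := by
    rw [exp_image_Ioi, Real.exp_log (by norm_num)]
  have hderiv : ∀ x ∈ Ioi (Real.log 2), HasDerivWithinAt Real.exp (Real.exp x) (Ioi (Real.log 2)) x :=
    fun x _ => (Real.hasDerivAt_exp x).hasDerivWithinAt
  rw [← himg, integrableOn_image_iff_integrableOn_abs_deriv_smul measurableSet_Ioi hderiv
    (Real.exp_injective.injOn)]
  have hpos : (0:ℝ) < Real.log 2 := Real.log_pos (by norm_num)
  have : EqOn (fun u : ℝ => |Real.exp u| • ((Real.exp u)⁻¹ * (Real.log (Real.exp u)) ^ (-b)))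
      (fun u : ℝ => u ^ (-b)) (Ioi (Real.log 2)) := by
    intro u _
    simp only [Real.log_exp, abs_of_pos (Real.exp_pos u), smul_eq_mul]
    field_simp
  rw [integrableOn_congr_fun this measurableSet_Ioi, integrableOn_Ioi_rpow_iff hpos]
  constructor <;> intro h <;> linarith

lemma log_lint_top : ∫⁻ r in Ioi (2:ℝ), ENNReal.ofReal (r⁻¹ * (Real.log r) ^ (-(1:ℝ))) = ⊤ := by
  by_contra h
  have : IntegrableOn (fun r : ℝ => r⁻¹ * (Real.log r) ^ (-(1:ℝ))) (Ioi 2) := by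
    rw [← lint_lt_top_iff measurableSet_Ioi (measurable_inv.fun_mul (Real.measurable_log.pow_const _)) ?_]
    · exact lt_top_iff_ne_top.2 h
    · intro r hr
      have h1 : (0:ℝ) < r := by linarith [mem_Ioi.1 hr]
      have h2 : (0:ℝ) < Real.log r := Real.log_pos (by linarith [mem_Ioi.1 hr])
      positivity
  rw [log_integrableOn_iff] at this
  linarith

lemma log_lint_lt_top {b : ℝ} (hb : 1 < b) :
    ∫⁻ r in Ioi (2:ℝ), ENNReal.ofReal (r⁻¹ * (Real.log r) ^ (-b)) < ⊤ := by
  rw [lint_lt_top_iff measurableSet_Ioi (measurable_inv.fun_mul (Real.measurable_log.pow_const _)) ?_]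
  · exact (log_integrableOn_iff b).2 hb
  · intro r hr
    have h1 : (0:ℝ) < r := by linarith [mem_Ioi.1 hr]
    have h2 : (0:ℝ) < Real.log r := Real.log_pos (by linarith [mem_Ioi.1 hr])
    positivity

lemma qnorm_lower {α : Type*} [MeasurableSpace α] (μ : Measure α) {q : ℝ≥0∞} (hq : q ≠ 0)
    {F : α → ℝ≥0∞} {s : Set α} {c : ℝ≥0∞} (hsm : MeasurableSet s) (hs : μ s ≠ 0)
    (hles : ∀ x ∈ s, c ≤ F x) :
    c * (μ s) ^ (1/q).toReal ≤ qnorm μ q F := by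
  rcases eq_or_ne q ⊤ with rfl | hqt
  · simp only [qnorm, if_neg hq, if_pos rfl]
    have : (1 / (⊤:ℝ≥0∞)).toReal = 0 := by simp
    rw [this, ENNReal.rpow_zero, mul_one]
    by_contra hlt
    push_neg at hlt
    have := ae_lt_of_essSup_lt hlt
    have h0 : μ s = 0 := by
      refine measure_mono_null (fun x hx => ?_) (ae_iff.1 this)
      exact fun hmem => absurd ((hles x hx).trans_lt hmem) (lt_irrefl _).elim
    exact hs h0
  · have hq' : 0 < q.toReal := ENNReal.toReal_pos hq hqt
    simp only [qnorm, if_neg hq, if_neg hqt]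
    have h1 : (1/q).toReal = 1 / q.toReal := by
      rw [one_div, one_div, ENNReal.toReal_inv]
    rw [h1]
    have hstep : c ^ q.toReal * μ s ≤ ∫⁻ x, F x ^ q.toReal ∂μ := by
      calc c ^ q.toReal * μ s = ∫⁻ _ in s, c ^ q.toReal ∂μ := by
            rw [setLIntegral_const]
        _ ≤ ∫⁻ x in s, F x ^ q.toReal ∂μ :=
            setLIntegral_mono' hsm (fun x hx => ENNReal.rpow_le_rpow (hles x hx) hq'.le)
        _ ≤ ∫⁻ x, F x ^ q.toReal ∂μ := setLIntegral_le_lintegral _ _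
    calc c * (μ s) ^ (1/q.toReal) = (c ^ q.toReal * μ s) ^ (1/q.toReal) := by
          rw [ENNReal.mul_rpow_of_nonneg _ _ (by positivity), ← ENNReal.rpow_mul,
            mul_one_div, div_self hq'.ne', ENNReal.rpow_one]
      _ ≤ _ := ENNReal.rpow_le_rpow hstep (by positivity)

lemma rpow_match {a b α β : ℝ} (ha : 0 < a) (h : ∀ r : ℝ, 0 < r → a * r ^ α ≤ b * r ^ β) :
    α = β := by
  have hb : 0 < b := by
    have := h 1 one_pos
    simp only [Real.one_rpow, mul_one] at this
    linarith
  by_contra hne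
  have hc : α - β ≠ 0 := sub_ne_zero.2 hne
  set r : ℝ := (b / a + 1) ^ (1 / (α - β)) with hr
  have hba : 0 < b / a + 1 := by positivity
  have hrpos : 0 < r := Real.rpow_pos_of_pos hba _
  have hrc : r ^ (α - β) = b / a + 1 := by
    rw [hr, ← Real.rpow_mul hba.le, one_div, inv_mul_cancel₀ hc, Real.rpow_one]
  have := h r hrpos
  have hsplit : r ^ α = r ^ β * r ^ (α - β) := by
    rw [← Real.rpow_add hrpos]; ring_nf
  rw [hsplit, ← mul_assoc] at this
  have hrb : 0 < r ^ β := Real.rpow_pos_of_pos hrpos _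
  have h2 : a * (b / a + 1) ≤ b := by
    have := (mul_le_mul_iff_of_pos_right hrb).1 (by linarith [this] :
      a * r ^ (α - β) * r ^ β ≤ b * r ^ β)
    calc a * (b/a+1) = a * r ^ (α - β) := by rw [hrc]
      _ ≤ b := this
  rw [mul_add, mul_div_cancel₀ _ ha.ne', mul_one] at h2
  linarith

lemma ennreal_rpow_match {a b : ℝ≥0∞} (ha : a ≠ 0) (ha' : a ≠ ⊤) (hb' : b ≠ ⊤) {α β : ℝ}
    (h : ∀ r : ℝ, 0 < r → a * ENNReal.ofReal (r ^ α) ≤ b * ENNReal.ofReal (r ^ β)) :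
    α = β := by
  refine rpow_match (a := a.toReal) (b := b.toReal) (ENNReal.toReal_pos ha ha') fun r hr => ?_
  have := h r hr
  have hfin : b * ENNReal.ofReal (r ^ β) ≠ ⊤ := ENNReal.mul_ne_top hb' ofReal_ne_top
  have := ENNReal.toReal_mono hfin this
  rwa [ENNReal.toReal_mul, ENNReal.toReal_mul, ENNReal.toReal_ofReal (Real.rpow_nonneg hr.le _),
    ENNReal.toReal_ofReal (Real.rpow_nonneg hr.le _)] at this


lemma E_ball_vol (k : ℕ) (hk : 0 < k) {r : ℝ} (hr : 0 ≤ r) :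
    volume (ball (0 : E k) r) = ENNReal.ofReal (r ^ (k : ℕ)) * volume (ball (0 : E k) 1) := by
  haveI := E_nontrivial k hk
  rw [Measure.addHaar_ball _ _ hr, finrank_euclideanSpace_fin]

-- lower bound for the potential of an indicator of a ball
lemma Tind_lower (n : ℕ) (hn : 0 < n) {lam r w b : ℝ} (hlam : 0 < lam) (hr : 0 < r)
    (hw : 0 ≤ w) (hb : w + r ≤ b) :
    ENNReal.ofReal (b ^ (-lam)) * (ENNReal.ofReal (r ^ (n : ℕ)) * volume (ball (0 : E n) 1))
      ≤ ∫⁻ y : E n, ENNReal.ofReal |Set.indicator (ball (0 : E n) r) (fun _ => (1:ℝ)) y| *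
          ENNReal.ofReal ((w + ‖y‖) ^ (-lam)) := by
  haveI := E_nontrivial n hn
  set A : Set (E n) := ball (0 : E n) r \ {0} with hA
  have hAm : MeasurableSet A := measurableSet_ball.diff (measurableSet_singleton _)
  have hμA : volume A = ENNReal.ofReal (r ^ (n : ℕ)) * volume (ball (0 : E n) 1) := by
    rw [hA, measure_diff_null (measure_singleton _), E_ball_vol n hn hr.le]
  calc ENNReal.ofReal (b ^ (-lam)) * (ENNReal.ofReal (r ^ (n:ℕ)) * volume (ball (0 : E n) 1))
      = ∫⁻ _ in A, ENNReal.ofReal (b ^ (-lam)) := by rw [setLIntegral_const, hμA]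
    _ ≤ ∫⁻ y in A, ENNReal.ofReal |Set.indicator (ball (0 : E n) r) (fun _ => (1:ℝ)) y| *
          ENNReal.ofReal ((w + ‖y‖) ^ (-lam)) := by
        refine setLIntegral_mono' hAm fun y hy => ?_
        have hy1 : y ∈ ball (0 : E n) r := hy.1
        have hy0 : (0:ℝ) < ‖y‖ := by
          simpa [norm_pos_iff] using hy.2
        have hker : b ^ (-lam) ≤ (w + ‖y‖) ^ (-lam) := by
          refine Real.rpow_le_rpow_of_nonpos (by linarith) ?_ (by linarith)
          have : ‖y‖ < r := by simpa [dist_eq_norm] using hy1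
          linarith
        rw [Set.indicator_of_mem hy1]
        simp only [abs_one, ENNReal.ofReal_one, one_mul]
        exact ENNReal.ofReal_le_ofReal hker
    _ ≤ _ := setLIntegral_le_lintegral _ _
lemma I_lower {u a R : ℝ} (hu : 0 ≤ u) (ha : 0 < a) (hR : 2 ≤ R) :
    ENNReal.ofReal (2 ^ (-1 - u - a) * R ^ (-u) * Real.log R ^ (-a))
      ≤ ∫⁻ r in Ioi R, ENNReal.ofReal (r ^ (-1 - u) * Real.log r ^ (-a)) := by
  have hR0 : (0:ℝ) < R := by linarith
  have hlogR : (0:ℝ) < Real.log R := Real.log_pos (by linarith)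
  have key : (2*R) ^ (-1-u) * (2 * Real.log R) ^ (-a) * (2*R - R)
      = 2 ^ (-1-u-a) * R ^ (-u) * Real.log R ^ (-a) := by
    rw [Real.mul_rpow (by norm_num) hR0.le, Real.mul_rpow (by norm_num) hlogR.le]
    have e1 : R ^ (-1-u) * R = R ^ (-u) := by
      rw [← Real.rpow_add_one hR0.ne']; ring_nf
    have e2 : (2:ℝ)^(-1-u) * (2:ℝ)^(-a) = 2^(-1-u-a) := by
      rw [← Real.rpow_add (by norm_num)]; ring_nf
    have e3 : 2*R - R = R := by ring
    rw [e3]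
    calc 2^(-1-u) * R^(-1-u) * ((2:ℝ)^(-a) * Real.log R^(-a)) * R
        = ((2:ℝ)^(-1-u) * 2^(-a)) * (R^(-1-u) * R) * Real.log R ^ (-a) := by ring
      _ = _ := by rw [e1, e2]
  calc ENNReal.ofReal (2 ^ (-1 - u - a) * R ^ (-u) * Real.log R ^ (-a))
      = ENNReal.ofReal ((2*R) ^ (-1-u) * (2 * Real.log R) ^ (-a)) * volume (Ioc R (2*R)) := by
        rw [Real.volume_Ioc, ← ENNReal.ofReal_mul (by positivity), key]
    _ = ∫⁻ _ in Ioc R (2*R), ENNReal.ofReal ((2*R) ^ (-1-u) * (2 * Real.log R) ^ (-a)) := by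
        rw [setLIntegral_const]
    _ ≤ ∫⁻ r in Ioc R (2*R), ENNReal.ofReal (r ^ (-1 - u) * Real.log r ^ (-a)) := by
        refine setLIntegral_mono' measurableSet_Ioc fun r hr => ?_
        have hrpos : (0:ℝ) < r := lt_trans hR0 hr.1
        have hlogr : (0:ℝ) < Real.log r := Real.log_pos (by nlinarith [hr.1])
        refine ENNReal.ofReal_le_ofReal (mul_le_mul ?_ ?_ (by positivity) (by positivity))
        · exact Real.rpow_le_rpow_of_nonpos hrpos hr.2 (by linarith)
        · refine Real.rpow_le_rpow_of_nonpos hlogr ?_ (by linarith)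
          calc Real.log r ≤ Real.log (2*R) := Real.log_le_log hrpos hr.2
            _ = Real.log 2 + Real.log R := Real.log_mul (by norm_num) (by linarith)
            _ ≤ 2 * Real.log R := by
                have : Real.log 2 ≤ Real.log R := Real.log_le_log (by norm_num) hR
                linarith
    _ ≤ _ := lintegral_mono_set (fun r hr => hr.1)
section AUX5
variable {n : ℕ}

noncomputable def logt (n : ℕ) (c a : ℝ) : E n → ℝ :=
  Set.indicator {z : E n | 2 ≤ ‖z‖} (fun z => ‖z‖ ^ (-c) * Real.log ‖z‖ ^ (-a))

lemma logt_meas (c a : ℝ) : Measurable (logt n c a) :=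
  Measurable.indicator
    ((measurable_norm.pow_const _).mul ((Real.measurable_log.comp measurable_norm).pow_const _))
    (measurableSet_le measurable_const measurable_norm)

lemma logt_nonneg (c a : ℝ) (y : E n) : 0 ≤ logt n c a y := by
  refine Set.indicator_nonneg (fun z _ => ?_) y
  have hz2 : (2:ℝ) ≤ ‖z‖ := ‹z ∈ {z : E n | 2 ≤ ‖z‖}›
  exact mul_nonneg (Real.rpow_nonneg (norm_nonneg z) _) (Real.rpow_nonneg
    (Real.log_nonneg (by linarith)) _)

lemma logt_memlp (hn : 0 < n) {p : ℝ≥0∞} (hp : 0 < p) {a c : ℝ} (ha : 0 < a) (hc : 0 ≤ c)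
    (hcp : p ≠ ⊤ → c * p.toReal = n ∧ 1 < a * p.toReal) :
    MemLp (logt n c a) p volume := by
  rcases eq_or_ne p ⊤ with rfl | hpt
  · refine memLp_top_of_bound (logt_meas c a).aestronglyMeasurable
      ((2:ℝ) ^ (-c) * Real.log 2 ^ (-a)) (ae_of_all _ fun y => ?_)
    rw [Real.norm_eq_abs, abs_of_nonneg (logt_nonneg c a y), logt]
    by_cases hy : y ∈ {z : E n | 2 ≤ ‖z‖}
    · rw [Set.indicator_of_mem hy]
      have hy2 : (2:ℝ) ≤ ‖y‖ := hy
      have hlog2 : (0:ℝ) < Real.log 2 := Real.log_pos (by norm_num)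
      have hlogy : Real.log 2 ≤ Real.log ‖y‖ := Real.log_le_log (by norm_num) hy2
      exact mul_le_mul (Real.rpow_le_rpow_of_nonpos (by norm_num) hy2 (by linarith))
        (Real.rpow_le_rpow_of_nonpos hlog2 hlogy (by linarith))
        (Real.rpow_nonneg (Real.log_nonneg (by linarith)) _)
        (Real.rpow_nonneg (by norm_num) _)
    · rw [Set.indicator_of_notMem hy]
      have hlog2 : (0:ℝ) < Real.log 2 := Real.log_pos (by norm_num)
      positivity
  · obtain ⟨hcp1, hcp2⟩ := hcp hpt
    have hp' : 0 < p.toReal := ENNReal.toReal_pos hp.ne' hpt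
    set p' := p.toReal with hp'def
    refine ⟨(logt_meas c a).aestronglyMeasurable, ?_⟩
    rw [eLpNorm_eq_lintegral_rpow_enorm_toReal hp.ne' hpt]
    refine ENNReal.rpow_lt_top_of_nonneg (by positivity) ?_
    set G : ℝ → ℝ≥0∞ :=
      Set.indicator (Ici 2) (fun t => ENNReal.ofReal ((t ^ (-c) * Real.log t ^ (-a)) ^ p'))
      with hG
    have hGmeas : Measurable G := Measurable.indicator
      ((((measurable_id.pow_const _).mul (Real.measurable_log.pow_const _)).pow_const
        _).ennreal_ofReal) measurableSet_Ici
    have hpt2 : ∀ y : E n, ‖logt n c a y‖ₑ ^ p' = G ‖y‖ := by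
      intro y
      by_cases hy : y ∈ {z : E n | 2 ≤ ‖z‖}
      · have hy2 : ‖y‖ ∈ Ici (2:ℝ) := hy
        rw [logt, Set.indicator_of_mem hy, hG, Set.indicator_of_mem hy2]
        have h2 : (2:ℝ) ≤ ‖y‖ := hy
        have h0 : 0 ≤ ‖y‖ ^ (-c) * Real.log ‖y‖ ^ (-a) :=
          mul_nonneg (Real.rpow_nonneg (norm_nonneg y) _)
            (Real.rpow_nonneg (Real.log_nonneg (by linarith)) _)
        rw [Real.enorm_eq_ofReal h0, ENNReal.ofReal_rpow_of_nonneg h0 hp'.le]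
      · have hy2 : ‖y‖ ∉ Ici (2:ℝ) := hy
        rw [logt, Set.indicator_of_notMem hy, hG, Set.indicator_of_notMem hy2]
        simp [ENNReal.zero_rpow_of_pos hp']
    rw [lintegral_congr hpt2, lintegral_polar n hn G hGmeas]
    have hinner : ∫⁻ r in Ioi (0:ℝ), ENNReal.ofReal (r ^ (n - 1 : ℕ)) * G r
        = ∫⁻ r in Ioi (2:ℝ), ENNReal.ofReal (r⁻¹ * Real.log r ^ (-(a * p'))) := by
      have hind : ∀ r ∈ Ioi (0:ℝ), ENNReal.ofReal (r ^ (n - 1 : ℕ)) * G r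
          = Set.indicator (Ici 2)
              (fun r => ENNReal.ofReal (r ^ (n - 1 : ℕ)) *
                ENNReal.ofReal ((r ^ (-c) * Real.log r ^ (-a)) ^ p')) r := by
        intro r _
        by_cases hr : r ∈ Ici (2:ℝ)
        · rw [hG, Set.indicator_of_mem hr, Set.indicator_of_mem hr]
        · rw [hG, Set.indicator_of_notMem hr, Set.indicator_of_notMem hr, mul_zero]
      rw [setLIntegral_congr_fun_ae measurableSet_Ioi (ae_of_all _ hind),
        setLIntegral_indicator measurableSet_Ici,
        Set.inter_eq_self_of_subset_left (fun x (hx : x ∈ Ici (2:ℝ)) =>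
          mem_Ioi.2 (lt_of_lt_of_le two_pos hx)),
        ← setLIntegral_congr Ioi_ae_eq_Ici]
      refine setLIntegral_congr_fun_ae measurableSet_Ioi (ae_of_all _ fun r hr => ?_)
      have hr2 : (2:ℝ) < r := hr
      have hr0 : (0:ℝ) < r := by linarith
      have hlog : (0:ℝ) < Real.log r := Real.log_pos (by linarith)
      rw [← ENNReal.ofReal_mul (by positivity)]
      congr 1
      rw [Real.mul_rpow (Real.rpow_nonneg hr0.le _) (Real.rpow_nonneg hlog.le _),
        ← Real.rpow_natCast r (n-1), ← Real.rpow_mul hr0.le, ← Real.rpow_mul hlog.le,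
        ← Real.rpow_neg_one r]
      rw [← mul_assoc, ← Real.rpow_add hr0]
      congr 2
      · have : ((n - 1 : ℕ) : ℝ) = (n:ℝ) - 1 := by
          rw [Nat.cast_sub hn]; norm_num
        rw [this]; linarith [hcp1]
      · ring
    rw [hinner]
    exact (ENNReal.mul_lt_top
      (ENNReal.mul_lt_top (ENNReal.natCast_lt_top n) measure_ball_lt_top)
      (log_lint_lt_top hcp2)).ne
end AUX5
lemma logt_T_lower (n : ℕ) (hn : 0 < n) {lam c a w : ℝ} (hc : 0 ≤ c) (ha : 0 < a)
    (hlam : 0 < lam) (hw : 0 ≤ w) :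
    (ENNReal.ofReal (2 ^ (-lam)) * ((n : ℝ≥0∞) * volume (ball (0 : E n) 1))) *
        ∫⁻ r in Set.Ioi (max 2 w),
          ENNReal.ofReal (r ^ ((n:ℝ) - 1 - c - lam) * Real.log r ^ (-a))
      ≤ ∫⁻ y : E n, ENNReal.ofReal |logt n c a y| * ENNReal.ofReal ((w + ‖y‖) ^ (-lam)) := by
  set R := max 2 w with hR
  have hR2 : (2:ℝ) ≤ R := le_max_left _ _
  have hRw : w ≤ R := le_max_right _ _
  have hR0 : (0:ℝ) < R := by linarith
  set G : ℝ → ℝ≥0∞ := Set.indicator (Ioi R)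
    (fun t => ENNReal.ofReal (t ^ (-c) * Real.log t ^ (-a)) *
      ENNReal.ofReal (2 ^ (-lam) * t ^ (-lam))) with hG
  have hGmeas : Measurable G := Measurable.indicator
    ((((measurable_id.pow_const _).mul (Real.measurable_log.pow_const _)).ennreal_ofReal).mul
      ((measurable_const.mul (measurable_id.pow_const _)).ennreal_ofReal)) measurableSet_Ioi
  have hpt : ∀ y : E n, G ‖y‖ ≤ ENNReal.ofReal |logt n c a y| *
      ENNReal.ofReal ((w + ‖y‖) ^ (-lam)) := by
    intro y
    by_cases hy : ‖y‖ ∈ Ioi R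
    · have hy2 : (2:ℝ) ≤ ‖y‖ := le_of_lt (lt_of_le_of_lt hR2 hy)
      have hy0 : (0:ℝ) < ‖y‖ := by linarith
      have hmem : y ∈ {z : E n | 2 ≤ ‖z‖} := hy2
      rw [hG, Set.indicator_of_mem hy, logt, Set.indicator_of_mem hmem]
      have hval0 : 0 ≤ ‖y‖ ^ (-c) * Real.log ‖y‖ ^ (-a) :=
        mul_nonneg (Real.rpow_nonneg hy0.le _)
          (Real.rpow_nonneg (Real.log_nonneg (by linarith)) _)
      rw [abs_of_nonneg hval0]
      refine mul_le_mul_right (ENNReal.ofReal_le_ofReal ?_) _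
      have h1 : w + ‖y‖ ≤ 2 * ‖y‖ := by
        have : w ≤ ‖y‖ := le_trans hRw (le_of_lt hy)
        linarith
      calc 2 ^ (-lam) * ‖y‖ ^ (-lam) = (2 * ‖y‖) ^ (-lam) :=
            (Real.mul_rpow (by norm_num) hy0.le).symm
        _ ≤ (w + ‖y‖) ^ (-lam) :=
            Real.rpow_le_rpow_of_nonpos (by linarith) h1 (by linarith)
    · rw [hG, Set.indicator_of_notMem hy]
      exact zero_le
  calc (ENNReal.ofReal (2 ^ (-lam)) * ((n : ℝ≥0∞) * volume (ball (0 : E n) 1))) *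
        ∫⁻ r in Set.Ioi R, ENNReal.ofReal (r ^ ((n:ℝ) - 1 - c - lam) * Real.log r ^ (-a))
      = ∫⁻ y : E n, G ‖y‖ := by
        rw [lintegral_polar n hn G hGmeas]
        have : ∫⁻ r in Ioi (0:ℝ), ENNReal.ofReal (r ^ (n - 1 : ℕ)) * G r
            = ENNReal.ofReal (2 ^ (-lam)) *
              ∫⁻ r in Ioi R, ENNReal.ofReal (r ^ ((n:ℝ) - 1 - c - lam) * Real.log r ^ (-a)) := by
          have hind : ∀ r ∈ Ioi (0:ℝ), ENNReal.ofReal (r ^ (n - 1 : ℕ)) * G r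
              = Set.indicator (Ioi R) (fun r => ENNReal.ofReal (2 ^ (-lam)) *
                  ENNReal.ofReal (r ^ ((n:ℝ) - 1 - c - lam) * Real.log r ^ (-a))) r := by
            intro r _
            by_cases hr : r ∈ Ioi R
            · have hr0 : (0:ℝ) < r := lt_trans hR0 hr
              have hlog : (0:ℝ) < Real.log r := Real.log_pos (by
                have := hr.out; have := hR2; simp only [mem_Ioi] at *; linarith)
              rw [hG, Set.indicator_of_mem hr, Set.indicator_of_mem hr]
              rw [← ENNReal.ofReal_mul (by positivity), ← ENNReal.ofReal_mul (by positivity),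
                ← ENNReal.ofReal_mul (by positivity)]
              congr 1
              rw [← Real.rpow_natCast r (n-1)]
              have hcast : ((n - 1 : ℕ) : ℝ) = (n:ℝ) - 1 := by
                rw [Nat.cast_sub hn]; norm_num
              rw [hcast]
              rw [show ((n:ℝ)-1-c-lam) = ((n:ℝ)-1) + (-c) + (-lam) by ring,
                Real.rpow_add hr0, Real.rpow_add hr0]
              ring
            · rw [hG, Set.indicator_of_notMem hr, Set.indicator_of_notMem hr, mul_zero]
          rw [setLIntegral_congr_fun_ae measurableSet_Ioi (ae_of_all _ hind),
            setLIntegral_indicator measurableSet_Ioi,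
            Set.inter_eq_self_of_subset_left (fun x (hx : x ∈ Ioi R) =>
              mem_Ioi.2 (lt_trans hR0 hx)),
            lintegral_const_mul' _ _ ENNReal.ofReal_ne_top]
        rw [this]; ring
    _ ≤ _ := lintegral_mono hpt

lemma div_top1 (m : ℕ) (hm : 0 < m) :
    ∫⁻ x : E m, Set.indicator {z : E m | 2 ≤ ‖z‖}
      (fun z => ENNReal.ofReal (‖z‖ ^ (-(m:ℝ)) * Real.log ‖z‖ ^ (-(1:ℝ)))) x = ⊤ := by
  set G : ℝ → ℝ≥0∞ := Set.indicator (Ici 2)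
    (fun t => ENNReal.ofReal (t ^ (-(m:ℝ)) * Real.log t ^ (-(1:ℝ)))) with hG
  have hGmeas : Measurable G := Measurable.indicator
    (((measurable_id.pow_const _).mul (Real.measurable_log.pow_const _)).ennreal_ofReal)
    measurableSet_Ici
  have hpt : ∀ x : E m, Set.indicator {z : E m | 2 ≤ ‖z‖}
      (fun z => ENNReal.ofReal (‖z‖ ^ (-(m:ℝ)) * Real.log ‖z‖ ^ (-(1:ℝ)))) x = G ‖x‖ := by
    intro x
    by_cases hx : x ∈ {z : E m | 2 ≤ ‖z‖}
    · rw [Set.indicator_of_mem hx, hG, Set.indicator_of_mem (show ‖x‖ ∈ Ici (2:ℝ) from hx)]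
    · rw [Set.indicator_of_notMem hx, hG,
        Set.indicator_of_notMem (show ‖x‖ ∉ Ici (2:ℝ) from hx)]
  rw [lintegral_congr hpt, lintegral_polar m hm G hGmeas]
  have hinner : ∫⁻ r in Ioi (0:ℝ), ENNReal.ofReal (r ^ (m - 1 : ℕ)) * G r = ⊤ := by
    have hind : ∀ r ∈ Ioi (0:ℝ), ENNReal.ofReal (r ^ (m - 1 : ℕ)) * G r
        = Set.indicator (Ici 2) (fun r => ENNReal.ofReal (r ^ (m - 1 : ℕ)) *
            ENNReal.ofReal (r ^ (-(m:ℝ)) * Real.log r ^ (-(1:ℝ)))) r := by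
      intro r _
      by_cases hr : r ∈ Ici (2:ℝ)
      · rw [hG, Set.indicator_of_mem hr, Set.indicator_of_mem hr]
      · rw [hG, Set.indicator_of_notMem hr, Set.indicator_of_notMem hr, mul_zero]
    rw [setLIntegral_congr_fun_ae measurableSet_Ioi (ae_of_all _ hind),
      setLIntegral_indicator measurableSet_Ici,
      Set.inter_eq_self_of_subset_left (fun x (hx : x ∈ Ici (2:ℝ)) =>
        mem_Ioi.2 (lt_of_lt_of_le two_pos hx)),
      ← setLIntegral_congr Ioi_ae_eq_Ici]
    rw [setLIntegral_congr_fun_ae measurableSet_Ioi (ae_of_all _ (fun r (hr : r ∈ Ioi (2:ℝ)) => ?_)),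
      log_lint_top]
    have hr0 : (0:ℝ) < r := lt_trans two_pos hr
    rw [← ENNReal.ofReal_mul (by positivity)]
    congr 1
    rw [← Real.rpow_natCast r (m-1)]
    have hcast : ((m - 1 : ℕ) : ℝ) = (m:ℝ) - 1 := by rw [Nat.cast_sub hm]; norm_num
    rw [hcast, ← mul_assoc, ← Real.rpow_add hr0, ← Real.rpow_neg_one r]
    ring_nf
  rw [hinner, ENNReal.mul_top]
  exact mul_ne_zero (Nat.cast_ne_zero.2 hm.ne') (measure_ball_pos _ _ one_pos).ne'

lemma div_top2 (m : ℕ) (hm : 0 < m) {t : ℝ} (ht : 0 < t) (htm : t ≤ m) :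
    ∫⁻ x : E m, ENNReal.ofReal ((‖x‖ + 1) ^ (-t)) = ⊤ := by
  have hGmeas : Measurable (fun u : ℝ => ENNReal.ofReal ((u + 1) ^ (-t))) :=
    ((measurable_id.add_const 1).pow_const _).ennreal_ofReal
  rw [lintegral_polar m hm _ hGmeas]
  rw [ENNReal.mul_eq_top]
  left
  constructor
  · refine mul_ne_zero (Nat.cast_ne_zero.2 hm.ne') (measure_ball_pos _ _ one_pos).ne'
  have hlow : ∫⁻ r in Ioi (1:ℝ), ENNReal.ofReal (2 ^ (-t)) * ENNReal.ofReal (r ^ ((m:ℝ) - 1 - t))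
      ≤ ∫⁻ r in Ioi (0:ℝ), ENNReal.ofReal (r ^ (m - 1 : ℕ)) * ENNReal.ofReal ((r + 1) ^ (-t)) := by
    refine le_trans (setLIntegral_mono' measurableSet_Ioi fun r hr => ?_)
      (lintegral_mono_set (fun r (hr : r ∈ Ioi (1:ℝ)) => mem_Ioi.2 (lt_trans one_pos hr)))
    have hr1 : (1:ℝ) < r := hr
    have hr0 : (0:ℝ) < r := by linarith
    rw [← ENNReal.ofReal_mul (by positivity), ← ENNReal.ofReal_mul (by positivity)]
    refine ENNReal.ofReal_le_ofReal ?_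
    have h1 : (2:ℝ) ^ (-t) * r ^ (-t) = (2 * r) ^ (-t) := (Real.mul_rpow (by norm_num) hr0.le).symm
    have h2 : (2 * r) ^ (-t) ≤ (r + 1) ^ (-t) :=
      Real.rpow_le_rpow_of_nonpos (by linarith) (by linarith) (by linarith)
    calc 2 ^ (-t) * r ^ ((m:ℝ) - 1 - t)
        = (2 ^ (-t) * r ^ (-t)) * r ^ ((m:ℝ) - 1) := by
          rw [show ((m:ℝ) - 1 - t) = (-t) + ((m:ℝ) - 1) by ring, Real.rpow_add hr0]; ring
      _ ≤ (r+1) ^ (-t) * r ^ ((m:ℝ) - 1) := by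
          refine mul_le_mul_of_nonneg_right (h1 ▸ h2) (Real.rpow_nonneg hr0.le _)
      _ = r ^ (m - 1 : ℕ) * (r + 1) ^ (-t) := by
          rw [← Real.rpow_natCast r (m-1)]
          have hcast : ((m - 1 : ℕ) : ℝ) = (m:ℝ) - 1 := by rw [Nat.cast_sub hm]; norm_num
          rw [hcast]; ring
  have hdiv : ∫⁻ r in Ioi (1:ℝ), ENNReal.ofReal (2 ^ (-t)) * ENNReal.ofReal (r ^ ((m:ℝ) - 1 - t))
      = ⊤ := by
    rw [lintegral_const_mul' _ _ ENNReal.ofReal_ne_top,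
      lint_rpow_top one_pos (by linarith), ENNReal.mul_top]
    exact (ENNReal.ofReal_pos.2 (Real.rpow_pos_of_pos two_pos _)).ne'
  exact top_le_iff.1 (hdiv ▸ hlow)
/-- Necessity for the kernel `(|x|+|y|)^{−λ}`: if
`‖∫ f(y)(|x|+|y|)^{−λ} dy‖_{L^q(ℝ^m)} ≲ ‖f‖_{L^p(ℝ^n)}` holds for all `f ∈ L^p`
with `λ > 0` and `0 < p, q ≤ ∞`, then `λ = n/p' + m/q` and `1 < p ≤ q < ∞`. -/
theorem stmt6 (n m : ℕ) (hn : 0 < n) (hm : 0 < m) (lam : ℝ) (p q : ℝ≥0∞)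
    (hlam : 0 < lam) (hp : 0 < p) (hq : 0 < q) (C : ℝ)
    (hbound : ∀ f : E n → ℝ, MemLp f p volume →
      qnorm volume q (fun x : E m => ∫⁻ y : E n,
          ENNReal.ofReal |f y| * ENNReal.ofReal ((‖x‖ + ‖y‖) ^ (-lam)) ∂volume)
        ≤ ENNReal.ofReal C * eLpNorm f p volume) :
    1 < p ∧ p ≤ q ∧ q ≠ ⊤ ∧ lam = n * (1 - (1/p).toReal) + m * (1/q).toReal := by
  classical
  set κn := volume (ball (0 : E n) 1) with hκn
  set κm := volume (ball (0 : E m) 1) with hκm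
  have hκn0 : κn ≠ 0 := (measure_ball_pos _ _ one_pos).ne'
  have hκnt : κn ≠ ⊤ := measure_ball_lt_top.ne
  have hκm0 : κm ≠ 0 := (measure_ball_pos _ _ one_pos).ne'
  have hκmt : κm ≠ ⊤ := measure_ball_lt_top.ne
  set s := (1/p).toReal with hs
  set σ := (1/q).toReal with hσ
  have hs' : s = p.toReal⁻¹ := by rw [hs, one_div, ENNReal.toReal_inv]
  have hσ' : σ = q.toReal⁻¹ := by rw [hσ, one_div, ENNReal.toReal_inv]
  have hs0 : 0 ≤ s := ENNReal.toReal_nonneg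
  have hσ0 : 0 ≤ σ := ENNReal.toReal_nonneg
  set ind : ℝ → E n → ℝ := fun r => Set.indicator (ball (0 : E n) r) (fun _ => (1:ℝ)) with hind
  have hindmem : ∀ r : ℝ, MemLp (ind r) p volume := fun r =>
    memLp_indicator_const p measurableSet_ball _ (Or.inr measure_ball_lt_top.ne)
  -- master inequality from indicator tests
  have master : ∀ r : ℝ, 0 < r →
      (ENNReal.ofReal ((2*r) ^ (-lam)) * (ENNReal.ofReal (r ^ (n:ℕ)) * κn)) *
        ((ENNReal.ofReal (r ^ (m:ℕ)) * κm) ^ σ)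
      ≤ ENNReal.ofReal C * ((ENNReal.ofReal (r ^ (n:ℕ)) * κn) ^ s) := by
    intro r hr
    have h1 := hbound (ind r) (hindmem r)
    have hqlow : (ENNReal.ofReal ((2*r) ^ (-lam)) * (ENNReal.ofReal (r ^ (n:ℕ)) * κn)) *
        ((ENNReal.ofReal (r ^ (m:ℕ)) * κm) ^ σ)
        ≤ qnorm volume q (fun x : E m => ∫⁻ y : E n,
            ENNReal.ofReal |ind r y| * ENNReal.ofReal ((‖x‖ + ‖y‖) ^ (-lam)) ∂volume) := by
      have := qnorm_lower (volume : Measure (E m)) hq.ne' (measurableSet_ball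
        (x := (0 : E m)) (ε := r)) ((measure_ball_pos _ _ hr).ne')
        (F := fun x : E m => ∫⁻ y : E n,
            ENNReal.ofReal |ind r y| * ENNReal.ofReal ((‖x‖ + ‖y‖) ^ (-lam)) ∂volume)
        (c := ENNReal.ofReal ((2*r) ^ (-lam)) * (ENNReal.ofReal (r ^ (n:ℕ)) * κn))
        (fun x hx => by
          have hx' : ‖x‖ < r := by simpa [mem_ball, dist_eq_norm] using hx
          exact Tind_lower n hn hlam hr (norm_nonneg x) (by linarith))
      rwa [E_ball_vol m hm hr.le, ← hκm, ← hσ] at this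
    have hup : eLpNorm (ind r) p volume ≤ (ENNReal.ofReal (r ^ (n:ℕ)) * κn) ^ s := by
      have h2 := eLpNorm_indicator_const_le (μ := (volume : Measure (E n)))
        (s := ball (0 : E n) r) (1:ℝ) p
      have h3 : s = 1 / p.toReal := by rw [hs', one_div]
      rw [E_ball_vol n hn hr.le, ← hκn, ← h3] at h2
      simpa using h2
    exact le_trans hqlow (le_trans h1 (mul_le_mul_right hup _))
  -- normalize to power form and match exponents
  have hlam_eq : lam = n * (1 - s) + m * σ := by
    have key : -lam + n + m*σ = n * s := by
      refine ennreal_rpow_match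
        (a := ENNReal.ofReal (2 ^ (-lam)) * κn * κm ^ σ)
        (b := ENNReal.ofReal C * κn ^ s) ?_ ?_ ?_ (fun r hr => ?_)
      · refine mul_ne_zero (mul_ne_zero ?_ hκn0) ?_
        · exact (ENNReal.ofReal_pos.2 (Real.rpow_pos_of_pos two_pos _)).ne'
        · exact (ENNReal.rpow_pos (lt_of_le_of_ne zero_le (Ne.symm hκm0)) hκmt).ne'
      · exact ENNReal.mul_ne_top (ENNReal.mul_ne_top ENNReal.ofReal_ne_top hκnt)
          (ENNReal.rpow_ne_top_of_nonneg hσ0 hκmt)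
      · exact ENNReal.mul_ne_top ENNReal.ofReal_ne_top
          (ENNReal.rpow_ne_top_of_nonneg hs0 hκnt)
      · have hLHS : (ENNReal.ofReal ((2*r) ^ (-lam)) * (ENNReal.ofReal (r ^ (n:ℕ)) * κn)) *
            ((ENNReal.ofReal (r ^ (m:ℕ)) * κm) ^ σ)
            = (ENNReal.ofReal (2 ^ (-lam)) * κn * κm ^ σ) *
              ENNReal.ofReal (r ^ (-lam + n + m*σ)) := by
          have e1 : ENNReal.ofReal ((2*r) ^ (-lam))
              = ENNReal.ofReal (2 ^ (-lam)) * ENNReal.ofReal (r ^ (-lam)) := by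
            rw [Real.mul_rpow (by norm_num) hr.le,
              ENNReal.ofReal_mul (Real.rpow_nonneg (by norm_num) _)]
          have e2 : (ENNReal.ofReal (r ^ (m:ℕ)) * κm) ^ σ
              = ENNReal.ofReal (r ^ ((m:ℝ)*σ)) * κm ^ σ := by
            rw [ENNReal.mul_rpow_of_nonneg _ _ hσ0,
              ENNReal.ofReal_rpow_of_nonneg (by positivity) hσ0,
              ← Real.rpow_natCast r m, ← Real.rpow_mul hr.le]
          have e3 : ENNReal.ofReal (r ^ (n:ℕ)) = ENNReal.ofReal (r ^ ((n:ℝ))) := by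
            rw [Real.rpow_natCast]
          rw [e1, e2, e3]
          have e4 : ENNReal.ofReal (r ^ (-lam)) * ENNReal.ofReal (r ^ ((n:ℝ))) *
              ENNReal.ofReal (r ^ ((m:ℝ)*σ)) = ENNReal.ofReal (r ^ (-lam + n + m*σ)) := by
            rw [← ENNReal.ofReal_mul (by positivity), ← ENNReal.ofReal_mul (by positivity),
              ← Real.rpow_add hr, ← Real.rpow_add hr]
          rw [← e4]; ring
        have hRHS : ENNReal.ofReal C * ((ENNReal.ofReal (r ^ (n:ℕ)) * κn) ^ s)
            = (ENNReal.ofReal C * κn ^ s) * ENNReal.ofReal (r ^ ((n:ℝ) * s)) := by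
          rw [ENNReal.mul_rpow_of_nonneg _ _ hs0,
            ENNReal.ofReal_rpow_of_nonneg (by positivity) hs0,
            ← Real.rpow_natCast r n, ← Real.rpow_mul hr.le]
          ring
        rw [← hLHS, ← hRHS]
        exact master r hr
    linarith
    -- Step 2 : 1 < p
  have hp1 : 1 < p := by
    by_contra hple
    push_neg at hple
    have hptne : p ≠ ⊤ := ne_top_of_le_ne_top ENNReal.one_ne_top hple
    have hptr : 0 < p.toReal := ENNReal.toReal_pos hp.ne' hptne
    have hs1 : 1 ≤ s := by
      have h1 : p.toReal ≤ 1 := by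
        have := ENNReal.toReal_mono ENNReal.one_ne_top hple
        simpa using this
      rw [hs']
      exact (one_le_inv₀ hptr).2 h1
    have hmσ : lam ≤ m * σ := by
      have h2 : (0:ℝ) ≤ (n:ℝ) * (s - 1) := mul_nonneg (Nat.cast_nonneg n) (by linarith)
      nlinarith [hlam_eq]
    rcases eq_or_ne q ⊤ with hqt | hqt
    · have hσz : σ = 0 := by simp [hσ', hqt]
      rw [hσz, mul_zero] at hmσ
      linarith
    · have hq'0 : 0 < q.toReal := ENNReal.toReal_pos hq.ne' hqt
      have ht0 : 0 < lam * q.toReal := by positivity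
      have htm : lam * q.toReal ≤ m := by
        have hσq : σ * q.toReal = 1 := by rw [hσ']; field_simp
        nlinarith
      have h1 := hbound (ind 1) (hindmem 1)
      have hF : ∀ x : E m, ENNReal.ofReal ((‖x‖+1) ^ (-lam)) * κn
          ≤ ∫⁻ y : E n, ENNReal.ofReal |ind 1 y| *
              ENNReal.ofReal ((‖x‖ + ‖y‖) ^ (-lam)) ∂volume := by
        intro x
        have := Tind_lower n hn (r := 1) (w := ‖x‖) (b := ‖x‖ + 1) hlam one_pos
          (norm_nonneg x) (le_refl _)
        simpa [← hκn] using this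
      have htop : qnorm volume q (fun x : E m => ∫⁻ y : E n,
          ENNReal.ofReal |ind 1 y| * ENNReal.ofReal ((‖x‖ + ‖y‖) ^ (-lam)) ∂volume) = ⊤ := by
        rw [qnorm, if_neg hq.ne', if_neg hqt]
        have hin : ∫⁻ x : E m, (∫⁻ y : E n, ENNReal.ofReal |ind 1 y| *
            ENNReal.ofReal ((‖x‖ + ‖y‖) ^ (-lam)) ∂volume) ^ q.toReal = ⊤ := by
          have hlow : ∀ x : E m, κn ^ q.toReal *
              ENNReal.ofReal ((‖x‖+1) ^ (-(lam * q.toReal)))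
              ≤ (∫⁻ y : E n, ENNReal.ofReal |ind 1 y| *
                  ENNReal.ofReal ((‖x‖ + ‖y‖) ^ (-lam)) ∂volume) ^ q.toReal := by
            intro x
            have hb0 : (0:ℝ) < ‖x‖ + 1 := by positivity
            have heq : κn ^ q.toReal * ENNReal.ofReal ((‖x‖+1) ^ (-(lam * q.toReal)))
                = (ENNReal.ofReal ((‖x‖+1) ^ (-lam)) * κn) ^ q.toReal := by
              rw [ENNReal.mul_rpow_of_nonneg _ _ hq'0.le,
                ENNReal.ofReal_rpow_of_nonneg (by positivity) hq'0.le,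
                ← Real.rpow_mul hb0.le]
              rw [show -lam * q.toReal = -(lam * q.toReal) by ring]
              ring
            rw [heq]
            exact ENNReal.rpow_le_rpow (hF x) hq'0.le
          have hmono := lintegral_mono (μ := (volume : Measure (E m))) hlow
          rw [lintegral_const_mul' _ _ (ENNReal.rpow_ne_top_of_nonneg hq'0.le hκnt),
            div_top2 m hm ht0 htm, ENNReal.mul_top
            (ENNReal.rpow_pos (lt_of_le_of_ne zero_le (Ne.symm hκn0)) hκnt).ne'] at hmono
          exact top_le_iff.1 hmono
        rw [hin]
        exact ENNReal.top_rpow_of_pos (by positivity)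
      rw [htop, top_le_iff] at h1
      exact (ENNReal.mul_ne_top ENNReal.ofReal_ne_top (hindmem 1).2.ne) h1
    -- Step 3 : q ≠ ⊤
  have hp1t : p ≠ ⊤ → 1 < p.toReal := fun hpt =>
    by rwa [← ENNReal.toReal_one, ENNReal.toReal_lt_toReal ENNReal.one_ne_top hpt]
  have hnsp : p ≠ ⊤ → (n:ℝ) * s * p.toReal = n := fun hpt => by
    have : p.toReal ≠ 0 := (ENNReal.toReal_pos hp.ne' hpt).ne'
    rw [hs']; field_simp
  have hK0 : ENNReal.ofReal (2 ^ (-lam)) * ((n : ℝ≥0∞) * κn) ≠ 0 :=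
    mul_ne_zero (ENNReal.ofReal_pos.2 (Real.rpow_pos_of_pos two_pos _)).ne'
      (mul_ne_zero (Nat.cast_ne_zero.2 hn.ne') hκn0)
  have hKt : ENNReal.ofReal (2 ^ (-lam)) * ((n : ℝ≥0∞) * κn) ≠ ⊤ :=
    ENNReal.mul_ne_top ENNReal.ofReal_ne_top
      (ENNReal.mul_ne_top (ENNReal.natCast_ne_top n) hκnt)
  have hqtop : q ≠ ⊤ := by
    intro hqt
    have hσz : σ = 0 := by simp [hσ', hqt]
    have hf : MemLp (logt n ((n:ℝ)*s) 1) p volume :=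
      logt_memlp hn hp one_pos (by positivity)
        (fun hpt => ⟨hnsp hpt, by simpa using hp1t hpt⟩)
    have h1 := hbound (logt n ((n:ℝ)*s) 1) hf
    have hTtop : ∀ x : E m, x ∈ ball (0 : E m) 2 →
        (∫⁻ y : E n, ENNReal.ofReal |logt n ((n:ℝ)*s) 1 y| *
          ENNReal.ofReal ((‖x‖ + ‖y‖) ^ (-lam)) ∂volume) = ⊤ := by
      intro x hx
      have hx2 : ‖x‖ < 2 := by simpa [mem_ball, dist_eq_norm] using hx
      have hmax : max 2 ‖x‖ = 2 := max_eq_left hx2.le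
      have hlow := logt_T_lower n hn (c := (n:ℝ)*s) (a := 1) (w := ‖x‖)
        (by positivity) one_pos hlam (norm_nonneg x)
      rw [hmax] at hlow
      have hexp : (n:ℝ) - 1 - (n:ℝ)*s - lam = -1 := by
        rw [hlam_eq, hσz]; ring
      rw [hexp] at hlow
      have hint : ∫⁻ r in Set.Ioi (2:ℝ), ENNReal.ofReal (r ^ (-1:ℝ) * Real.log r ^ (-(1:ℝ)))
          = ⊤ := by
        rw [← log_lint_top]
        refine setLIntegral_congr_fun_ae measurableSet_Ioi (ae_of_all _ fun r hr => ?_)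
        have hr0 : (0:ℝ) < r := lt_trans two_pos hr
        rw [Real.rpow_neg_one]
      rw [hint, ENNReal.mul_top hK0] at hlow
      exact top_le_iff.1 hlow
    have hqn : qnorm volume q (fun x : E m => ∫⁻ y : E n,
        ENNReal.ofReal |logt n ((n:ℝ)*s) 1 y| *
          ENNReal.ofReal ((‖x‖ + ‖y‖) ^ (-lam)) ∂volume) = ⊤ := by
      have := qnorm_lower (volume : Measure (E m)) hq.ne'
        (measurableSet_ball (x := (0 : E m)) (ε := 2))
        ((measure_ball_pos _ _ two_pos).ne')
        (c := (⊤ : ℝ≥0∞)) (fun x hx => le_of_eq (hTtop x hx).symm)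
      rw [← hσ, hσz, ENNReal.rpow_zero, mul_one] at this
      exact top_le_iff.1 this
    rw [hqn, top_le_iff] at h1
    exact (ENNReal.mul_ne_top ENNReal.ofReal_ne_top hf.2.ne) h1
    -- Step 4 : p ≤ q
  have hpq : p ≤ q := by
    by_contra hqp
    push_neg at hqp
    have hq'0 : 0 < q.toReal := ENNReal.toReal_pos hq.ne' hqtop
    have hσpos : 0 < σ := by rw [hσ']; positivity
    have hσq : σ * q.toReal = 1 := by rw [hσ']; field_simp
    have hf : MemLp (logt n ((n:ℝ)*s) σ) p volume := by
      refine logt_memlp hn hp hσpos (by positivity) (fun hpt => ⟨hnsp hpt, ?_⟩)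
      have hlt : q.toReal < p.toReal := (ENNReal.toReal_lt_toReal hqtop hpt).2 hqp
      rw [hσ', inv_mul_eq_div]
      exact (one_lt_div hq'0).2 hlt
    have h1 := hbound (logt n ((n:ℝ)*s) σ) hf
    set K := ENNReal.ofReal (2 ^ (-lam)) * ((n : ℝ≥0∞) * κn) with hKdef
    have hexp : (n:ℝ) - 1 - (n:ℝ)*s - lam = -1 - (m*σ) := by rw [hlam_eq]; ring
    have hTlow : ∀ x : E m, 2 ≤ ‖x‖ →
        K * ENNReal.ofReal (2 ^ (-1 - m*σ - σ) * ‖x‖ ^ (-(m*σ)) * Real.log ‖x‖ ^ (-σ))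
        ≤ ∫⁻ y : E n, ENNReal.ofReal |logt n ((n:ℝ)*s) σ y| *
            ENNReal.ofReal ((‖x‖ + ‖y‖) ^ (-lam)) ∂volume := by
      intro x hx2
      have hlow := logt_T_lower n hn (c := (n:ℝ)*s) (a := σ) (w := ‖x‖)
        (by positivity) hσpos hlam (norm_nonneg x)
      rw [hexp, max_eq_right hx2] at hlow
      exact le_trans (mul_le_mul_right (I_lower (by positivity) hσpos hx2) K) hlow
    have hin : ∫⁻ x : E m, (∫⁻ y : E n, ENNReal.ofReal |logt n ((n:ℝ)*s) σ y| *
        ENNReal.ofReal ((‖x‖ + ‖y‖) ^ (-lam)) ∂volume) ^ q.toReal = ⊤ := by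
      set c2 : ℝ := 2 ^ (-1 - m*σ - σ) with hc2
      have hc2pos : 0 < c2 := Real.rpow_pos_of_pos two_pos _
      set c3 : ℝ≥0∞ := K ^ q.toReal * ENNReal.ofReal (c2 ^ q.toReal) with hc3
      have hptw : ∀ x : E m, Set.indicator {z : E m | 2 ≤ ‖z‖}
          (fun z => c3 * ENNReal.ofReal (‖z‖ ^ (-(m:ℝ)) * Real.log ‖z‖ ^ (-(1:ℝ)))) x
          ≤ (∫⁻ y : E n, ENNReal.ofReal |logt n ((n:ℝ)*s) σ y| *
              ENNReal.ofReal ((‖x‖ + ‖y‖) ^ (-lam)) ∂volume) ^ q.toReal := by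
        intro x
        by_cases hx : x ∈ {z : E m | 2 ≤ ‖z‖}
        · rw [Set.indicator_of_mem hx]
          have hx2 : (2:ℝ) ≤ ‖x‖ := hx
          have hx0 : (0:ℝ) < ‖x‖ := by linarith
          have hlogx : (0:ℝ) < Real.log ‖x‖ := Real.log_pos (by linarith)
          have heq : c3 * ENNReal.ofReal (‖x‖ ^ (-(m:ℝ)) * Real.log ‖x‖ ^ (-(1:ℝ)))
              = (K * ENNReal.ofReal (c2 * ‖x‖ ^ (-(m*σ)) * Real.log ‖x‖ ^ (-σ))) ^ q.toReal := by
            have e1 : -((m:ℝ)*σ) * q.toReal = -(m:ℝ) := by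
              rw [show -((m:ℝ)*σ) * q.toReal = -((m:ℝ)*(σ*q.toReal)) by ring, hσq, mul_one]
            have e2 : -σ * q.toReal = -1 := by
              rw [show -σ * q.toReal = -(σ*q.toReal) by ring, hσq]
            rw [ENNReal.mul_rpow_of_nonneg _ _ hq'0.le,
              ENNReal.ofReal_rpow_of_nonneg (by positivity) hq'0.le, hc3, mul_assoc]
            congr 1
            rw [← ENNReal.ofReal_mul (by positivity)]
            congr 1
            rw [Real.mul_rpow (by positivity) (by positivity),
              Real.mul_rpow (by positivity) (by positivity),
              ← Real.rpow_mul hx0.le, ← Real.rpow_mul hlogx.le, e1, e2]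
            ring
          rw [heq]
          exact ENNReal.rpow_le_rpow (hTlow x hx2) hq'0.le
        · rw [Set.indicator_of_notMem hx]
          exact zero_le
      have hmono := lintegral_mono (μ := (volume : Measure (E m))) hptw
      have hconst : ∫⁻ x : E m, Set.indicator {z : E m | 2 ≤ ‖z‖}
          (fun z => c3 * ENNReal.ofReal (‖z‖ ^ (-(m:ℝ)) * Real.log ‖z‖ ^ (-(1:ℝ)))) x = ⊤ := by
        have hre : ∀ x : E m, Set.indicator {z : E m | 2 ≤ ‖z‖}
            (fun z => c3 * ENNReal.ofReal (‖z‖ ^ (-(m:ℝ)) * Real.log ‖z‖ ^ (-(1:ℝ)))) x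
            = c3 * Set.indicator {z : E m | 2 ≤ ‖z‖}
              (fun z => ENNReal.ofReal (‖z‖ ^ (-(m:ℝ)) * Real.log ‖z‖ ^ (-(1:ℝ)))) x := by
          intro x
          by_cases hx : x ∈ {z : E m | 2 ≤ ‖z‖}
          · rw [Set.indicator_of_mem hx, Set.indicator_of_mem hx]
          · rw [Set.indicator_of_notMem hx, Set.indicator_of_notMem hx, mul_zero]
        have hc3t : c3 ≠ ⊤ := ENNReal.mul_ne_top
          (ENNReal.rpow_ne_top_of_nonneg hq'0.le hKt) ENNReal.ofReal_ne_top
        have hc30 : c3 ≠ 0 := mul_ne_zero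
          (ENNReal.rpow_pos (lt_of_le_of_ne zero_le (Ne.symm hK0)) hKt).ne'
          (ENNReal.ofReal_pos.2 (by positivity)).ne'
        rw [lintegral_congr hre, lintegral_const_mul' _ _ hc3t, div_top1 m hm,
          ENNReal.mul_top hc30]
      rw [hconst] at hmono
      exact top_le_iff.1 hmono
    have hqn : qnorm volume q (fun x : E m => ∫⁻ y : E n,
        ENNReal.ofReal |logt n ((n:ℝ)*s) σ y| *
          ENNReal.ofReal ((‖x‖ + ‖y‖) ^ (-lam)) ∂volume) = ⊤ := by
      rw [qnorm, if_neg hq.ne', if_neg hqtop, hin]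
      exact ENNReal.top_rpow_of_pos (by positivity)
    rw [hqn, top_le_iff] at h1
    exact (ENNReal.mul_ne_top ENNReal.ofReal_ne_top hf.2.ne) h1
  exact ⟨hp1, hpq, hqtop, by rw [hlam_eq]⟩
end

section
/- Let n > m ≥ 1 be integers, 1 < p < ∞, and λ = (n−m)/p' + m. Then the estimate ‖∫_{ℝ^m} h(x)(|x − y₁| + |y₂|)^{−λ} dx‖_{L^{p'}_{(y₁,y₂)}(ℝ^m × ℝ^{n−m})} ≲ ‖h‖_{L^{p'}(ℝ^m)} fails: for h = χ_{\{|x| ≤ 1\}}, the left-hand side is infinite. -/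
open MeasureTheory ENNReal Metric Set

lemma div_top (k : ℕ) (hk : 0 < k) :
    ∫⁻ y in (closedBall (0 : E k) (1/2) \ {0}), ENNReal.ofReal (‖y‖ ^ (-(k:ℝ))) ∂volume = ⊤ := by
  set R : ℝ := 1/2 with hR
  have hR0 : (0:ℝ) < R := by norm_num
  set s : ℕ → Set (E k) := fun j => closedBall 0 (R/2^j) \ closedBall 0 (R/2^(j+1)) with hs
  have hrpos : ∀ j : ℕ, (0:ℝ) < R/2^j := fun j => by positivity
  have hmem : ∀ j : ℕ, ∀ x ∈ s j, R/2^(j+1) < ‖x‖ ∧ ‖x‖ ≤ R/2^j := by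
    intro j x hx
    obtain ⟨h1, h2⟩ := hx
    rw [mem_closedBall_zero_iff] at h1 h2
    exact ⟨lt_of_not_ge h2, h1⟩
  have hmeas : ∀ j, MeasurableSet (s j) :=
    fun j => (measurableSet_closedBall).diff measurableSet_closedBall
  have hdisj : Pairwise (Function.onFun Disjoint s) := by
    have key : ∀ i j : ℕ, i < j → Disjoint (s i) (s j) := by
      intro i j hij
      rw [Set.disjoint_left]
      intro x hxi hxj
      have h1 := (hmem i x hxi).1
      have h2 := (hmem j x hxj).2
      have : R/2^j ≤ R/2^(i+1) := by
        apply div_le_div_of_nonneg_left hR0.le (by positivity)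
        exact pow_le_pow_right₀ (by norm_num) hij
      linarith
    intro i j hij
    rcases lt_or_gt_of_ne hij with h | h
    · exact key i j h
    · exact (key j i h).symm
  have hsub : (⋃ j, s j) ⊆ closedBall (0 : E k) (1/2) \ {0} := by
    intro x hx
    obtain ⟨j, hj⟩ := mem_iUnion.1 hx
    obtain ⟨h1, h2⟩ := hmem j x hj
    constructor
    · rw [mem_closedBall_zero_iff]
      calc ‖x‖ ≤ R/2^j := h2
        _ ≤ R/1 := by
            apply div_le_div_of_nonneg_left hR0.le one_pos
            exact one_le_pow₀ (by norm_num)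
        _ = 1/2 := by norm_num
    · simp only [mem_singleton_iff]
      intro h0
      rw [h0, norm_zero] at h1
      exact absurd h1 (not_lt.2 (hrpos (j+1)).le)
  refine top_le_iff.1 ?_
  calc (⊤ : ℝ≥0∞) = ∑' _ : ℕ, (ENNReal.ofReal (1 - (1/2:ℝ)^k) * volume (ball (0:E k) 1)) := by
        rw [ENNReal.tsum_const_eq_top_of_ne_zero]
        refine mul_ne_zero ?_ ?_
        · have : (1/2:ℝ)^k < 1 := pow_lt_one₀ (by norm_num) (by norm_num) hk.ne'
          exact (ENNReal.ofReal_pos.2 (by linarith)).ne'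
        · exact (measure_ball_pos _ _ one_pos).ne'
    _ ≤ ∑' j : ℕ, ∫⁻ y in s j, ENNReal.ofReal (‖y‖ ^ (-(k:ℝ))) ∂volume := by
        apply ENNReal.tsum_le_tsum
        intro j
        set r : ℝ := R/2^j with hr
        have hr0 : (0:ℝ) < r := hrpos j
        -- volume of annulus
        have hvol : volume (s j) = ENNReal.ofReal (r^k * (1 - (1/2:ℝ)^k)) * volume (ball (0:E k) 1) := by
          rw [hs]
          rw [measure_diff (closedBall_subset_closedBall (by
              apply div_le_div_of_nonneg_left hR0.le (by positivity)
              exact pow_le_pow_right₀ (by norm_num) (Nat.le_succ j)))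
            measurableSet_closedBall.nullMeasurableSet measure_closedBall_lt_top.ne]
          rw [Measure.addHaar_closedBall _ _ (hrpos j).le, Measure.addHaar_closedBall _ _ (hrpos (j+1)).le]
          rw [finrank_euclideanSpace_fin]
          rw [← ENNReal.sub_mul (fun _ _ => measure_ball_lt_top.ne)]
          congr 1
          rw [← ENNReal.ofReal_sub _ (by positivity)]
          congr 1
          have : R/2^(j+1) = r/2 := by rw [hr, pow_succ]; ring
          rw [this, div_pow, div_pow]
          ring_nf
          have h4 : ((1:ℝ)/4)^k = ((1:ℝ)/2)^(k*2) := by rw [pow_mul']; norm_num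
          rw [hr, hR]; simp only [one_div, div_eq_mul_inv, ← inv_pow, mul_pow, ← pow_mul]
          ring
        calc ENNReal.ofReal (1 - (1/2:ℝ)^k) * volume (ball (0:E k) 1)
            = ENNReal.ofReal (r ^ (-(k:ℝ))) * volume (s j) := by
              rw [hvol, ← mul_assoc, ← ENNReal.ofReal_mul (by positivity)]
              congr 2
              rw [← mul_assoc, ← Real.rpow_natCast r k, ← Real.rpow_add hr0, neg_add_cancel,
                Real.rpow_zero, one_mul]
          _ = ∫⁻ _ in s j, ENNReal.ofReal (r ^ (-(k:ℝ))) ∂volume := by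
              rw [setLIntegral_const, mul_comm]
          _ ≤ ∫⁻ y in s j, ENNReal.ofReal (‖y‖ ^ (-(k:ℝ))) ∂volume := by
              apply setLIntegral_mono (by measurability)
              intro x hx
              apply ENNReal.ofReal_le_ofReal
              exact Real.rpow_le_rpow_of_nonpos ((hrpos (j+1)).trans (hmem j x hx).1) (hmem j x hx).2
                (neg_nonpos.2 (Nat.cast_nonneg k))
    _ = ∫⁻ y in ⋃ j, s j, ENNReal.ofReal (‖y‖ ^ (-(k:ℝ))) ∂volume := (lintegral_iUnion hmeas hdisj _).symm
    _ ≤ _ := lintegral_mono_set hsub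


lemma inner_lb (m : ℕ) (lam : ℝ) (hlam : 0 < lam) (y₁ : E m) (hy₁ : ‖y₁‖ ≤ 1/2)
    (r : ℝ) (hr0 : 0 < r) (hr : r ≤ 1/2) :
    (volume (ball (0:E m) 1)).toReal * 2 ^ (-lam) * r ^ ((m:ℝ) - lam) ≤
      ∫ x : E m, (if ‖x‖ ≤ 1 then (1:ℝ) else 0) * (‖x - y₁‖ + r) ^ (-lam) ∂volume := by
  set φ : E m → ℝ := fun x => (‖x - y₁‖ + r) ^ (-lam) with hφdef
  have hφc : Continuous φ := by
    apply Continuous.rpow_const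
    · exact ((continuous_id.sub continuous_const).norm.add continuous_const)
    · intro x; left; positivity
  have hfeq : (fun x : E m => (if ‖x‖ ≤ 1 then (1:ℝ) else 0) * (‖x - y₁‖ + r) ^ (-lam))
      = (closedBall (0:E m) 1).indicator φ := by
    funext x
    by_cases hx : ‖x‖ ≤ 1
    · rw [if_pos hx, one_mul, Set.indicator_of_mem (mem_closedBall_zero_iff.2 hx)]
    · rw [if_neg hx, zero_mul,
        Set.indicator_of_notMem (fun h => hx (mem_closedBall_zero_iff.1 h))]
  have hfint : Integrable ((closedBall (0:E m) 1).indicator φ) volume :=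
    ((hφc.continuousOn).integrableOn_compact (isCompact_closedBall _ _)).integrable_indicator
      measurableSet_closedBall
  set L : E m → ℝ := (closedBall y₁ r).indicator (fun _ => (2*r) ^ (-lam)) with hLdef
  have hLint : Integrable L volume :=
    (integrableOn_const measure_closedBall_lt_top.ne).integrable_indicator
      measurableSet_closedBall
  have hle : ∀ x, L x ≤ (closedBall (0:E m) 1).indicator φ x := by
    intro x
    by_cases hx : x ∈ closedBall y₁ r
    · have hxy : ‖x - y₁‖ ≤ r := by rwa [mem_closedBall_iff_norm] at hx
      have hx1 : x ∈ closedBall (0:E m) 1 := by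
        rw [mem_closedBall_zero_iff]
        calc ‖x‖ = ‖x - y₁ + y₁‖ := by rw [sub_add_cancel]
          _ ≤ ‖x - y₁‖ + ‖y₁‖ := norm_add_le _ _
          _ ≤ 1 := by linarith
      rw [hLdef, Set.indicator_of_mem hx, Set.indicator_of_mem hx1, hφdef]
      exact Real.rpow_le_rpow_of_nonpos (by positivity) (by linarith) (by linarith)
    · rw [hLdef, Set.indicator_of_notMem hx]
      apply Set.indicator_nonneg
      intro y _; positivity
  have hmono := integral_mono hLint hfint hle
  rw [← hfeq] at hmono
  refine le_trans (le_of_eq ?_) hmono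
  rw [hLdef, integral_indicator_const _ measurableSet_closedBall]
  rw [measureReal_def, Measure.addHaar_closedBall _ _ hr0.le, finrank_euclideanSpace_fin]
  rw [ENNReal.toReal_mul, ENNReal.toReal_ofReal (by positivity)]
  rw [smul_eq_mul, Real.mul_rpow (by norm_num) hr0.le, ← Real.rpow_natCast r m]
  rw [sub_eq_add_neg, Real.rpow_add hr0]
  ring

/-- Failure of the dual endpoint estimate for the generalized Riesz potential:
for `n > m ≥ 1`, `1 < p < ∞`, `λ = (n−m)/p' + m` and `h = χ_{|x|≤1}`, the
`L^{p'}`-norm in `(y₁,y₂) ∈ ℝ^m × ℝ^{n−m}` of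
`∫ h(x)(|x−y₁|+|y₂|)^{−λ} dx` is infinite. -/
theorem stmt9 (n m : ℕ) (hm : 0 < m) (hmn : m < n) (p lam : ℝ) (hp : 1 < p)
    (hhom : lam = ((n : ℝ) - m) * (1 - 1/p) + m) :
    eLpNorm (fun y : E m × E (n - m) =>
        ∫ x : E m, (if ‖x‖ ≤ 1 then (1:ℝ) else 0) * (‖x - y.1‖ + ‖y.2‖) ^ (-lam) ∂volume)
      (ENNReal.ofReal (p / (p - 1))) volume = ⊤ := by
  have hk0 : 0 < n - m := Nat.sub_pos_of_lt hmn
  have hkr : ((n - m : ℕ):ℝ) = (n:ℝ) - m := by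
    rw [Nat.cast_sub hmn.le]
  have hp0 : (0:ℝ) < p := by linarith
  have hp1 : (0:ℝ) < p - 1 := by linarith
  set q := p / (p-1) with hq
  have hq0 : 0 < q := by positivity
  have hm1 : (1:ℝ) ≤ (m:ℝ) := by exact_mod_cast hm
  have hnm : (0:ℝ) ≤ (n:ℝ) - m := by
    have : (m:ℝ) ≤ n := by exact_mod_cast hmn.le
    linarith
  have h1p : (0:ℝ) < 1 - 1/p := by
    rw [sub_pos, div_lt_one hp0]; linarith
  have hlam : 0 < lam := by
    rw [hhom]; nlinarith
  have hexp : ((m:ℝ) - lam) * q = -(((n - m : ℕ)):ℝ) := by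
    rw [hhom, hq, hkr]; field_simp; ring
  set V := (volume (ball (0:E m) 1)).toReal with hV
  have hV0 : 0 < V :=
    ENNReal.toReal_pos (measure_ball_pos _ _ one_pos).ne' measure_ball_lt_top.ne
  set c := V * 2 ^ (-lam) with hc
  have hc0 : 0 < c := by positivity
  set F := fun y : E m × E (n - m) =>
    ∫ x : E m, (if ‖x‖ ≤ 1 then (1:ℝ) else 0) * (‖x - y.1‖ + ‖y.2‖) ^ (-lam) ∂volume with hF
  rw [eLpNorm_eq_lintegral_rpow_enorm_toReal (ENNReal.ofReal_pos.2 hq0).ne' ENNReal.ofReal_ne_top]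
  rw [ENNReal.toReal_ofReal hq0.le]
  suffices h : ∫⁻ y : E m × E (n - m), (‖F y‖₊ : ℝ≥0∞) ^ q ∂volume = ⊤ by
    simp only [enorm_eq_nnnorm]
    rw [h]
    exact ENNReal.top_rpow_of_pos (by positivity)
  set A := closedBall (0:E m) (1/2) with hA
  set B := closedBall (0:E (n - m)) (1/2) \ {0} with hB
  have hAmeas : MeasurableSet A := measurableSet_closedBall
  have hBmeas : MeasurableSet B := measurableSet_closedBall.diff (measurableSet_singleton _)
  set g : E m × E (n - m) → ℝ≥0∞ :=
    fun y => ENNReal.ofReal (c^q) * ENNReal.ofReal (‖y.2‖ ^ (-((n - m : ℕ):ℝ))) with hg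
  have hpt : ∀ y ∈ A ×ˢ B, g y ≤ (‖F y‖₊ : ℝ≥0∞) ^ q := by
    rintro ⟨y₁, y₂⟩ ⟨hy₁, hy₂⟩
    have hy1n : ‖y₁‖ ≤ 1/2 := mem_closedBall_zero_iff.1 hy₁
    have hy2n : ‖y₂‖ ≤ 1/2 := mem_closedBall_zero_iff.1 hy₂.1
    have hy2pos : (0:ℝ) < ‖y₂‖ := norm_pos_iff.2 hy₂.2
    have h1 : c * ‖y₂‖ ^ ((m:ℝ) - lam) ≤ F (y₁, y₂) :=
      inner_lb m lam hlam y₁ hy1n ‖y₂‖ hy2pos hy2n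
    have h2 : ENNReal.ofReal (c * ‖y₂‖ ^ ((m:ℝ)-lam)) ≤ (‖F (y₁,y₂)‖₊ : ℝ≥0∞) := by
      rw [← enorm_eq_nnnorm, ← ofReal_norm_eq_enorm, Real.norm_eq_abs]
      exact ENNReal.ofReal_le_ofReal (h1.trans (le_abs_self _))
    have ht : (c * ‖y₂‖ ^ ((m:ℝ)-lam)) ^ q = c^q * ‖y₂‖ ^ (-((n - m : ℕ):ℝ)) := by
      rw [Real.mul_rpow hc0.le (Real.rpow_nonneg hy2pos.le _),
        ← Real.rpow_mul hy2pos.le, hexp]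
    calc g (y₁,y₂) = ENNReal.ofReal ((c * ‖y₂‖ ^ ((m:ℝ)-lam)) ^ q) := by
          simp only [hg]
          rw [ht, ENNReal.ofReal_mul (by positivity)]
      _ = ENNReal.ofReal (c * ‖y₂‖ ^ ((m:ℝ)-lam)) ^ q :=
          (ENNReal.ofReal_rpow_of_pos (show (0:ℝ) < c * ‖y₂‖ ^ ((m:ℝ)-lam) by positivity)).symm
      _ ≤ _ := ENNReal.rpow_le_rpow h2 hq0.le
  have key : ∫⁻ y in A ×ˢ B, g y ∂volume = ⊤ := by
    rw [hg, lintegral_const_mul' _ _ ENNReal.ofReal_ne_top]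
    have hBint : ∫⁻ y in A ×ˢ B,
        ENNReal.ofReal (‖(y : E m × E (n-m)).2‖ ^ (-((n - m : ℕ):ℝ))) ∂volume = ⊤ := by
      have hr1 : Measurable (fun t : ℝ => t ^ (-((n - m : ℕ):ℝ))) := by measurability
      have hgm : Measurable (fun y : E m × E (n - m) =>
          ENNReal.ofReal (‖y.2‖ ^ (-((n - m : ℕ):ℝ)))) :=
        ENNReal.measurable_ofReal.comp (hr1.comp measurable_snd.norm)
      rw [Measure.volume_eq_prod, ← Measure.prod_restrict]
      rw [lintegral_prod _ hgm.aemeasurable]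
      simp only [Prod.snd]
      rw [lintegral_const, Measure.restrict_apply_univ]
      rw [hB, div_top (n - m) hk0, hA,
        ENNReal.top_mul (measure_closedBall_pos _ _ (by norm_num)).ne']
    rw [hBint, ENNReal.mul_top (ENNReal.ofReal_pos.2 (by positivity)).ne']
  refine top_le_iff.1 ?_
  rw [← key, ← lintegral_indicator (hAmeas.prod hBmeas)]
  apply lintegral_mono
  intro y
  by_cases hy : y ∈ A ×ˢ B
  · rw [Set.indicator_of_mem hy]; exact hpt y hy
  · rw [Set.indicator_of_notMem hy]; exact zero_le
end

section
/- Let 0 < q < p < ∞, n, m ≥ 1, ε > 0 with q(1+ε)/p < 1, and λ = n/p' + m/q. Define f(y) = χ_{\{|y| ≤ 1/2\}}(y) · |y|^{−n/p} (log(1/|y|))^{−(1+ε)/p} on ℝ^n. Then f ∈ L^p(ℝ^n), and for |x| sufficiently small, ∫_{ℝ^n} f(y)(|x|+|y|)^{−λ} dy ≳ |x|^{−m/q} (log(1/|x|))^{−(1+ε)/p}; consequently the L^q(ℝ^m) norm of x ↦ ∫_{ℝ^n} f(y)(|x|+|y|)^{−λ} dy is infinite. -/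
open MeasureTheory ENNReal

section Aux
open Measure Set Metric Filter
open scoped Topology

local notation "dim" => Module.finrank ℝ

lemma lintegral_fun_norm_addHaar' {E' : Type*} [NormedAddCommGroup E'] [NormedSpace ℝ E']
    [MeasurableSpace E'] [BorelSpace E'] [FiniteDimensional ℝ E'] [Nontrivial E']
    (μ : Measure E') [μ.IsAddHaarMeasure] (g : ℝ → ℝ≥0∞) (hg : Measurable g) :
    ∫⁻ x, g ‖x‖ ∂μ = (dim E') * μ (ball 0 1) *
      ∫⁻ r in Ioi (0:ℝ), ENNReal.ofReal (r ^ (dim E' - 1)) * g r := by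
  have hmeas : Measurable fun x : sphere (0:E') 1 × Ioi (0:ℝ) => g x.2 :=
    hg.comp (measurable_subtype_coe.comp measurable_snd)
  calc
    ∫⁻ x, g ‖x‖ ∂μ = ∫⁻ x : ({(0)}ᶜ : Set E'), g ‖x.1‖ ∂(μ.comap (↑)) := by
      rw [lintegral_subtype_comap (measurableSet_singleton (0:E')).compl (fun x ↦ g ‖x‖),
        restrict_compl_singleton]
    _ = ∫⁻ x : ({(0)}ᶜ : Set E'),
          g ((homeomorphUnitSphereProd E') x).2 ∂(μ.comap (↑)) := by
      refine lintegral_congr fun x => ?_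
      rw [homeomorphUnitSphereProd_apply_snd_coe]
    _ = ∫⁻ x : sphere (0 : E') 1 × Ioi (0 : ℝ), g x.2
        ∂μ.toSphere.prod (.volumeIoiPow (dim E' - 1)) :=
      μ.measurePreserving_homeomorphUnitSphereProd.lintegral_comp hmeas
    _ = (μ.toSphere univ) * ∫⁻ r : Ioi (0:ℝ), g r ∂(Measure.volumeIoiPow (dim E' - 1)) := by
      rw [lintegral_prod _ hmeas.aemeasurable]
      simp [lintegral_const, mul_comm]
    _ = (dim E') * μ (ball 0 1) *
        ∫⁻ r in Ioi (0:ℝ), ENNReal.ofReal (r ^ (dim E' - 1)) * g r := by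
      rw [μ.toSphere_apply_univ, Measure.volumeIoiPow,
        lintegral_withDensity_eq_lintegral_mul _ (by fun_prop)
          (show Measurable fun r : Ioi (0:ℝ) => g r.1 by fun_prop)]
      rw [← lintegral_subtype_comap measurableSet_Ioi
        (fun r : ℝ ↦ ENNReal.ofReal (r ^ (dim E' - 1)) * g r)]
      rfl

lemma hasDerivAt_G {t : ℝ} (ht : t ≠ 0) {r : ℝ} (hr0 : 0 < r) (hr1 : r < 1) :
    HasDerivAt (fun r : ℝ => -(t⁻¹ * Real.log (1/r) ^ t))
      (r⁻¹ * Real.log (1/r) ^ (t-1)) r := by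
  have hlog : Real.log r < 0 := Real.log_neg hr0 hr1
  have h1 : HasDerivAt (fun x : ℝ => -Real.log x) (-r⁻¹) r :=
    (Real.hasDerivAt_log hr0.ne').neg
  have h2 : HasDerivAt (fun x : ℝ => (-Real.log x) ^ t)
      (t * (-Real.log r) ^ (t-1) * -r⁻¹) r :=
    (Real.hasDerivAt_rpow_const (p := t) (Or.inl (by linarith))).comp r h1
  have h3 : HasDerivAt (fun x : ℝ => -(t⁻¹ * (-Real.log x) ^ t)) _ r := (h2.const_mul t⁻¹).neg
  have heq : (fun x : ℝ => -(t⁻¹ * Real.log (1/x) ^ t))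
      = fun x : ℝ => -(t⁻¹ * (-Real.log x) ^ t) := by
    funext x; rw [one_div, Real.log_inv]
  rw [heq]
  convert h3 using 1
  rw [one_div, Real.log_inv]
  field_simp

lemma integrableOn_aux {u : ℝ} (hu : 0 < u) :
    IntegrableOn (fun r : ℝ => r⁻¹ * Real.log (1/r) ^ (-(1+u))) (Ioc 0 (1/2)) := by
  have key : ∀ x ∈ Ioo (0:ℝ) (1/2), HasDerivAt (fun r : ℝ => -((-u)⁻¹ * Real.log (1/r) ^ (-u)))
      (x⁻¹ * Real.log (1/x) ^ (-(1+u))) x := by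
    intro x hx
    have := hasDerivAt_G (t := -u) (by linarith) hx.1 (by linarith [hx.2])
    convert this using 2
    ring_nf
  apply intervalIntegral.integrableOn_deriv_of_nonneg _ key
  · intro x hx
    have h1 : (1:ℝ) < 1/x := (one_lt_one_div hx.1 (by linarith [hx.2]))
    have h2 : 0 < Real.log (1/x) := Real.log_pos h1
    exact le_of_lt (mul_pos (inv_pos.2 hx.1) (Real.rpow_pos_of_pos h2 _))
  · intro x hx
    rcases eq_or_lt_of_le hx.1 with h0 | h0
    · rw [← h0]
      have h00 : -((-u)⁻¹ * Real.log (1/(0:ℝ)) ^ (-u)) = 0 := by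
        simp [Real.zero_rpow (by linarith : -u ≠ 0)]
      unfold ContinuousWithinAt
      have hc : (𝓝 ((fun r : ℝ => -((-u)⁻¹ * Real.log (1/r) ^ (-u))) 0)) = 𝓝 (0:ℝ) := by
        norm_num [Real.zero_rpow (show -u ≠ 0 by linarith)]
      rw [hc]
      have htend : Tendsto (fun r : ℝ => Real.log (1/r)) (𝓝[>] (0:ℝ)) atTop := by
        have : Tendsto Real.log (𝓝[>] (0:ℝ)) atBot := Real.tendsto_log_nhdsGT_zero
        have := (tendsto_neg_atBot_atTop).comp this
        refine this.congr fun r => ?_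
        rw [one_div, Real.log_inv]
        rfl
      have h2 : Tendsto (fun r : ℝ => Real.log (1/r) ^ (-u)) (𝓝[>] (0:ℝ)) (𝓝 0) :=
        (tendsto_rpow_neg_atTop hu).comp htend
      have h3 : Tendsto (fun r : ℝ => -((-u)⁻¹ * Real.log (1/r) ^ (-u))) (𝓝[>] (0:ℝ)) (𝓝 0) := by
        have := (h2.const_mul (-u)⁻¹).neg
        simpa using this
      have hsub : Icc (0:ℝ) (1/2) ⊆ insert 0 (Ioi 0) := by
        intro y hy
        rcases eq_or_lt_of_le hy.1 with h | h
        · exact Or.inl h.symm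
        · exact Or.inr h
      refine Tendsto.mono_left ?_ (nhdsWithin_mono _ hsub)
      rw [nhdsWithin_insert]
      refine Tendsto.sup ?_ h3
      rw [tendsto_pure_left]
      intro s hs
      have h5 : (0:ℝ) ∈ s := mem_of_mem_nhds hs
      simpa [Real.zero_rpow (show -u ≠ 0 by linarith)] using h5
    · apply ContinuousAt.continuousWithinAt
      have hlogpos : 0 < Real.log (1/x) :=
        Real.log_pos (by rw [lt_one_div (by norm_num) h0]; linarith [hx.2])
      have : ContinuousAt (fun r : ℝ => Real.log (1/r)) x := by
        apply ContinuousAt.log _ (by positivity)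
        exact (continuousAt_const.div continuousAt_id h0.ne')
      exact ((this.rpow_const (Or.inl hlogpos.ne')).const_mul _).neg

lemma contOn_aux (s : ℝ) {a b : ℝ} (ha : 0 < a) (hb : b < 1) :
    ContinuousOn (fun r : ℝ => r⁻¹ * Real.log (1/r) ^ (-s)) (Icc a b) := by
  intro x hx
  have hx0 : 0 < x := lt_of_lt_of_le ha hx.1
  have hx1 : x < 1 := lt_of_le_of_lt hx.2 hb
  have hlogpos : 0 < Real.log (1/x) := Real.log_pos (one_lt_one_div hx0 hx1)
  apply ContinuousAt.continuousWithinAt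
  have hlog : ContinuousAt (fun r : ℝ => Real.log (1/r)) x :=
    ContinuousAt.log (continuousAt_const.div continuousAt_id hx0.ne') (by positivity)
  exact (continuousAt_id.inv₀ hx0.ne').mul (hlog.rpow_const (Or.inl hlogpos.ne'))

lemma lint_Ioc_eq (s : ℝ) (hs1 : s < 1) {a b : ℝ} (ha : 0 < a) (hab : a ≤ b) (hb : b < 1) :
    ∫⁻ r in Ioc a b, ENNReal.ofReal (r⁻¹ * Real.log (1/r) ^ (-s)) =
      ENNReal.ofReal ((1-s)⁻¹ * (Real.log (1/a) ^ (1-s) - Real.log (1/b) ^ (1-s))) := by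
  set g' : ℝ → ℝ := fun r => r⁻¹ * Real.log (1/r) ^ (-s) with hg'
  have hderiv : ∀ x ∈ uIcc a b, HasDerivAt (fun r : ℝ => -((1-s)⁻¹ * Real.log (1/r) ^ (1-s)))
      (g' x) x := by
    intro x hx
    rw [uIcc_of_le hab] at hx
    have := hasDerivAt_G (t := 1-s) (by linarith) (lt_of_lt_of_le ha hx.1)
      (lt_of_le_of_lt hx.2 hb)
    have he : (1:ℝ) - s - 1 = -s := by ring
    rw [he] at this
    exact this
  have hcont : ContinuousOn g' (Icc a b) := contOn_aux s ha hb
  have hint : IntervalIntegrable g' volume a b :=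
    ContinuousOn.intervalIntegrable (by rwa [uIcc_of_le hab])
  have hftc := intervalIntegral.integral_eq_sub_of_hasDerivAt hderiv hint
  have hIoc : IntegrableOn g' (Ioc a b) :=
    (intervalIntegrable_iff_integrableOn_Ioc_of_le hab).mp hint
  have hnn : 0 ≤ᵐ[volume.restrict (Ioc a b)] g' := by
    filter_upwards [ae_restrict_mem measurableSet_Ioc] with r hr
    have hr0 : 0 < r := lt_of_lt_of_le ha hr.1.le
    have : 0 < Real.log (1/r) := Real.log_pos (one_lt_one_div hr0 (lt_of_le_of_lt hr.2 hb))
    positivity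
  rw [← ofReal_integral_eq_lintegral_ofReal hIoc hnn, ← intervalIntegral.integral_of_le hab, hftc]
  congr 1
  ring

lemma real_pow_helper {k : ℕ} (hk : 0 < k) {r : ℝ} (hr : 0 < r) :
    (r:ℝ) ^ (k-1) * r ^ (-(k:ℝ)) = r⁻¹ := by
  rw [← Real.rpow_natCast r (k-1), ← Real.rpow_add hr, Nat.cast_sub hk]
  have h1 : ((k:ℝ)) - 1 + -(k:ℝ) = -1 := by ring
  rw [Nat.cast_one, h1, Real.rpow_neg_one]

end Aux

/-- The counterexample showing `q ≥ p` is necessary: for `0 < q < p < ∞`, `ε > 0`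
with `q(1+ε)/p < 1` and `λ = n/p' + m/q`, the function
`f(y) = χ_{|y|≤1/2} |y|^{−n/p}(log 1/|y|)^{−(1+ε)/p}` lies in `L^p(ℝ^n)`,
satisfies `∫ f(y)(|x|+|y|)^{−λ} dy ≳ |x|^{−m/q}(log 1/|x|)^{−(1+ε)/p}` for small
`|x|`, and hence the `L^q(ℝ^m)` norm of `x ↦ ∫ f(y)(|x|+|y|)^{−λ} dy` is infinite. -/
theorem stmt11 (n m : ℕ) (hn : 0 < n) (hm : 0 < m) (p q ε lam : ℝ)
    (hq0 : 0 < q) (hqp : q < p) (hε : 0 < ε) (hqεp : q * (1 + ε) / p < 1)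
    (hhom : lam = n * (1 - 1/p) + m / q)
    (f : E n → ℝ)
    (hfdef : ∀ y, f y = if ‖y‖ ≤ 1/2 then
        ‖y‖ ^ (-(n : ℝ)/p) * Real.log (1/‖y‖) ^ (-(1+ε)/p) else 0)
    (F : E m → ℝ≥0∞)
    (hFdef : ∀ x, F x = ∫⁻ y : E n,
        ENNReal.ofReal (f y) * ENNReal.ofReal ((‖x‖ + ‖y‖) ^ (-lam)) ∂volume) :
    MemLp f (ENNReal.ofReal p) volume ∧
    (∃ c : ℝ, 0 < c ∧ ∃ δ : ℝ, 0 < δ ∧ ∀ x : E m, 0 < ‖x‖ → ‖x‖ ≤ δ →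
      ENNReal.ofReal (c * ‖x‖ ^ (-(m : ℝ)/q) * Real.log (1/‖x‖) ^ (-(1+ε)/p)) ≤ F x) ∧
    ∫⁻ x : E m, F x ^ q ∂volume = ⊤ := by
  have hp0 : 0 < p := hq0.trans hqp
  haveI : Nontrivial (E n) := Module.nontrivial_of_finrank_pos (R := ℝ)
    (by rw [finrank_euclideanSpace_fin]; exact hn)
  haveI : Nontrivial (E m) := Module.nontrivial_of_finrank_pos (R := ℝ)
    (by rw [finrank_euclideanSpace_fin]; exact hm)
  have hf_nonneg : ∀ y, 0 ≤ f y := by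
    intro y
    rw [hfdef y]
    split
    · have h1 : (0:ℝ) ≤ Real.log (1/‖y‖) := by
        rcases eq_or_lt_of_le (norm_nonneg y) with h | h
        · simp [← h]
        · exact Real.log_nonneg ((one_le_one_div h (by linarith [‹‖y‖ ≤ 1/2›])))
      positivity
    · exact le_refl 0
  have hf_meas : Measurable f := by
    have : f = fun y => if ‖y‖ ≤ 1/2 then
        ‖y‖ ^ (-(n : ℝ)/p) * Real.log (1/‖y‖) ^ (-(1+ε)/p) else 0 := funext hfdef
    rw [this]
    apply Measurable.ite (measurableSet_le (by fun_prop) measurable_const) _ measurable_const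
    have hlm : Measurable fun y : E n => Real.log (1/‖y‖) :=
      Real.measurable_log.comp (by fun_prop)
    fun_prop
  -- Part 1
  have part1 : MemLp f (ENNReal.ofReal p) volume := by
    refine ⟨hf_meas.aestronglyMeasurable, ?_⟩
    rw [eLpNorm_eq_lintegral_rpow_enorm_toReal (by simp [hp0] : ENNReal.ofReal p ≠ 0)
      ENNReal.ofReal_ne_top]
    rw [ENNReal.toReal_ofReal hp0.le]
    refine ENNReal.rpow_lt_top_of_nonneg (by positivity) ?_
    rw [← lt_top_iff_ne_top]
    set g : ℝ → ℝ≥0∞ := fun r => ENNReal.ofReal (if r ≤ 1/2 then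
        r ^ (-(n : ℝ)/p) * Real.log (1/r) ^ (-(1+ε)/p) else 0) ^ p with hg
    have hgmeas : Measurable g := by
      apply Measurable.pow_const
      apply Measurable.ennreal_ofReal
      apply Measurable.ite (measurableSet_le (by fun_prop) measurable_const) _ measurable_const
      have hlm : Measurable fun r : ℝ => Real.log (1/r) :=
        Real.measurable_log.comp (by fun_prop)
      fun_prop
    have hrw : ∀ x : E n, (‖f x‖ₑ) ^ p = g ‖x‖ := by
      intro x
      rw [Real.enorm_eq_ofReal (hf_nonneg x), hg, hfdef x]
    calc ∫⁻ x : E n, ‖f x‖ₑ ^ p ∂volume = ∫⁻ x : E n, g ‖x‖ ∂volume :=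
          lintegral_congr hrw
      _ = (Module.finrank ℝ (E n)) * volume (Metric.ball (0 : E n) 1) *
          ∫⁻ r in Set.Ioi (0:ℝ), ENNReal.ofReal (r ^ (Module.finrank ℝ (E n) - 1)) * g r :=
          lintegral_fun_norm_addHaar' volume g hgmeas
      _ < ⊤ := by
          rw [finrank_euclideanSpace_fin]
          refine ENNReal.mul_lt_top (ENNReal.mul_lt_top (ENNReal.natCast_lt_top n)
            measure_ball_lt_top) ?_
          have hsplit : Set.Ioi (0:ℝ) = Set.Ioc (0:ℝ) (1/2) ∪ Set.Ioi (1/2) :=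
            (Set.Ioc_union_Ioi_eq_Ioi (by norm_num)).symm
          rw [hsplit, lintegral_union measurableSet_Ioi (Set.Ioc_disjoint_Ioi le_rfl)]
          have hz : ∫⁻ r in Set.Ioi (1/2 : ℝ), ENNReal.ofReal (r ^ (n - 1)) * g r = 0 := by
            rw [setLIntegral_congr_fun measurableSet_Ioi
              (fun r hr => ?_), lintegral_zero]
            have hnle : ¬ (r ≤ 1/2) := not_le.mpr hr
            have hg0 : g r = 0 := by
              rw [hg]
              simp only [if_neg hnle, ENNReal.ofReal_zero]
              exact ENNReal.zero_rpow_of_pos hp0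
            rw [hg0, mul_zero]
          rw [hz, add_zero]
          have hcong : ∫⁻ r in Set.Ioc (0:ℝ) (1/2), ENNReal.ofReal (r ^ (n - 1)) * g r =
              ∫⁻ r in Set.Ioc (0:ℝ) (1/2),
                ENNReal.ofReal (r⁻¹ * Real.log (1/r) ^ (-(1+ε))) := by
            refine setLIntegral_congr_fun measurableSet_Ioc
              (fun r hr => ?_)
            have hr0 : 0 < r := hr.1
            have hL : 0 < Real.log (1/r) :=
              Real.log_pos (one_lt_one_div hr0 (lt_of_le_of_lt hr.2 (by norm_num)))
            rw [hg]
            simp only [if_pos hr.2]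
            have hA : 0 < r ^ (-(n : ℝ)/p) * Real.log (1/r) ^ (-(1+ε)/p) :=
              mul_pos (Real.rpow_pos_of_pos hr0 _) (Real.rpow_pos_of_pos hL _)
            rw [ENNReal.ofReal_rpow_of_pos hA, ← ENNReal.ofReal_mul (by positivity)]
            congr 1
            rw [Real.mul_rpow (Real.rpow_pos_of_pos hr0 _).le (Real.rpow_pos_of_pos hL _).le,
              ← Real.rpow_mul hr0.le, ← Real.rpow_mul hL.le,
              div_mul_cancel₀ _ hp0.ne', div_mul_cancel₀ _ hp0.ne']
            rw [show (r:ℝ) ^ (n-1) * (r ^ (-(n:ℝ)) * Real.log (1/r) ^ (-(1+ε))) =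
              ((r:ℝ) ^ (n-1) * r ^ (-(n:ℝ))) * Real.log (1/r) ^ (-(1+ε)) by ring]
            rw [real_pow_helper hn hr0]
          rw [hcong]
          exact IntegrableOn.setLIntegral_lt_top (integrableOn_aux hε)

  -- Part 2
  have hvlt : volume (Metric.ball (0 : E n) 1) ≠ ⊤ := measure_ball_lt_top.ne
  have hv0 : volume (Metric.ball (0 : E n) 1) ≠ 0 := (Metric.measure_ball_pos volume 0 one_pos).ne'
  set vr : ℝ := (volume (Metric.ball (0 : E n) 1)).toReal with hvr
  have hvrpos : 0 < vr := ENNReal.toReal_pos hv0 hvlt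
  set c₀ : ℝ := min ((2:ℝ) ^ (-lam)) ((3:ℝ) ^ (-lam)) with hc₀
  have hc₀pos : 0 < c₀ :=
    lt_min (Real.rpow_pos_of_pos two_pos _) (Real.rpow_pos_of_pos (by norm_num) _)
  set K : ℝ := (2:ℝ) ^ (-(n:ℝ)/p) * c₀ with hK
  have hKpos : 0 < K := mul_pos (Real.rpow_pos_of_pos two_pos _) hc₀pos
  set c : ℝ := vr * K with hc
  have hcpos : 0 < c := mul_pos hvrpos hKpos
  have hlow : ∀ x : E m, 0 < ‖x‖ → ‖x‖ ≤ (1/4:ℝ) →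
      ENNReal.ofReal (c * ‖x‖ ^ (-(m : ℝ)/q) * Real.log (1/‖x‖) ^ (-(1+ε)/p)) ≤ F x := by
    intro x hx0 hx4
    set r : ℝ := ‖x‖ with hr
    set L : ℝ := Real.log (1/r) with hLdef
    have hLpos : 0 < L := Real.log_pos (one_lt_one_div hx0 (by linarith))
    set A : Set (E n) := Metric.closedBall 0 (2*r) \ Metric.ball 0 r with hA
    have hAmeas : MeasurableSet A := measurableSet_closedBall.diff measurableSet_ball
    set B : ℝ := (2:ℝ)^(-(n:ℝ)/p) * r^(-(n:ℝ)/p) * L^(-(1+ε)/p) * (c₀ * r^(-lam)) with hB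
    have hpoint : ∀ y ∈ A, ENNReal.ofReal B ≤
        ENNReal.ofReal (f y) * ENNReal.ofReal ((‖x‖+‖y‖)^(-lam)) := by
      intro y hy
      obtain ⟨hy2', hy1'⟩ := hy
      have hy2 : ‖y‖ ≤ 2*r := by
        simpa [Metric.mem_closedBall, dist_zero_right] using hy2'
      have hy1 : r ≤ ‖y‖ := by
        simp only [Metric.mem_ball, dist_zero_right, not_lt] at hy1'
        exact hy1'
      have hy0 : 0 < ‖y‖ := lt_of_lt_of_le hx0 hy1
      have hyh : ‖y‖ ≤ 1/2 := by linarith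
      have hLy : 0 < Real.log (1/‖y‖) := Real.log_pos (one_lt_one_div hy0 (by linarith))
      have hexp1 : -(n:ℝ)/p ≤ 0 :=
        div_nonpos_of_nonpos_of_nonneg (by simp) hp0.le
      have hexp2 : -(1+ε)/p ≤ 0 := div_nonpos_of_nonpos_of_nonneg (by linarith) hp0.le
      have sub1 : (2:ℝ)^(-(n:ℝ)/p) * r^(-(n:ℝ)/p) ≤ ‖y‖ ^ (-(n:ℝ)/p) := by
        rw [← Real.mul_rpow (by norm_num) hx0.le]
        exact Real.rpow_le_rpow_of_nonpos hy0 hy2 hexp1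
      have sub2 : L^(-(1+ε)/p) ≤ Real.log (1/‖y‖) ^ (-(1+ε)/p) := by
        apply Real.rpow_le_rpow_of_nonpos hLy _ hexp2
        rw [hLdef]
        apply Real.log_le_log (by positivity)
        exact one_div_le_one_div_of_le hx0 hy1
      have sub3 : c₀ * r^(-lam) ≤ (‖x‖ + ‖y‖) ^ (-lam) := by
        rcases le_or_gt lam 0 with hlam | hlam
        · calc c₀ * r^(-lam) ≤ (2:ℝ)^(-lam) * r^(-lam) :=
              mul_le_mul_of_nonneg_right (min_le_left _ _) (Real.rpow_nonneg hx0.le _)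
            _ = (2*r) ^ (-lam) := (Real.mul_rpow (by norm_num) hx0.le).symm
            _ ≤ (‖x‖ + ‖y‖) ^ (-lam) :=
              Real.rpow_le_rpow (by positivity) (by rw [← hr]; linarith) (by linarith)
        · calc c₀ * r^(-lam) ≤ (3:ℝ)^(-lam) * r^(-lam) :=
              mul_le_mul_of_nonneg_right (min_le_right _ _) (Real.rpow_nonneg hx0.le _)
            _ = (3*r) ^ (-lam) := (Real.mul_rpow (by norm_num) hx0.le).symm
            _ ≤ (‖x‖ + ‖y‖) ^ (-lam) := by
              apply Real.rpow_le_rpow_of_nonpos (by rw [← hr]; positivity)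
                (by rw [← hr]; linarith) (by linarith)
      rw [hfdef y, if_pos hyh, ← ENNReal.ofReal_mul (by positivity)]
      apply ENNReal.ofReal_le_ofReal
      calc B = ((2:ℝ)^(-(n:ℝ)/p) * r^(-(n:ℝ)/p) * L^(-(1+ε)/p)) * (c₀ * r^(-lam)) := by
            rw [hB]
        _ ≤ (‖y‖^(-(n:ℝ)/p) * Real.log (1/‖y‖)^(-(1+ε)/p)) * ((‖x‖+‖y‖)^(-lam)) := by
            apply mul_le_mul _ sub3 (by positivity) (by positivity)
            exact mul_le_mul sub1 sub2 (by positivity) (by positivity)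
    have hsub : Metric.ball (0:E n) r ⊆ Metric.closedBall (0:E n) (2*r) :=
      Metric.ball_subset_closedBall.trans (Metric.closedBall_subset_closedBall (by linarith))
    have hvolA : ENNReal.ofReal (r ^ n) * volume (Metric.ball (0 : E n) 1) ≤ volume A := by
      rw [hA, measure_diff hsub measurableSet_ball.nullMeasurableSet measure_ball_lt_top.ne,
        Measure.addHaar_closedBall volume 0 (by positivity),
        Measure.addHaar_ball volume 0 hx0.le, finrank_euclideanSpace_fin]
      apply ENNReal.le_sub_of_add_le_right
        (by exact ENNReal.mul_ne_top ENNReal.ofReal_ne_top hvlt)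
      rw [← add_mul, ← ENNReal.ofReal_add (by positivity) (by positivity)]
      apply mul_le_mul_left (ENNReal.ofReal_le_ofReal _) _
      have h2n : (2:ℝ) ≤ 2^n := by
        calc (2:ℝ) = 2^1 := (pow_one 2).symm
        _ ≤ 2^n := pow_le_pow_right₀ (by norm_num) hn
      calc r^n + r^n = 2 * r^n := by ring
        _ ≤ 2^n * r^n := mul_le_mul_of_nonneg_right h2n (by positivity)
        _ = (2*r)^n := (mul_pow 2 r n).symm
    have hFge : ENNReal.ofReal B * (ENNReal.ofReal (r^n) * volume (Metric.ball (0 : E n) 1))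
        ≤ F x := by
      calc ENNReal.ofReal B * (ENNReal.ofReal (r^n) * volume (Metric.ball (0 : E n) 1))
          ≤ ENNReal.ofReal B * volume A := mul_le_mul_right hvolA _
        _ = ∫⁻ _ in A, ENNReal.ofReal B ∂volume := (setLIntegral_const A _).symm
        _ ≤ ∫⁻ y in A, ENNReal.ofReal (f y) * ENNReal.ofReal ((‖x‖+‖y‖)^(-lam)) ∂volume :=
            setLIntegral_mono' hAmeas hpoint
        _ ≤ ∫⁻ y, ENNReal.ofReal (f y) * ENNReal.ofReal ((‖x‖+‖y‖)^(-lam)) ∂volume :=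
            setLIntegral_le_lintegral _ _
        _ = F x := (hFdef x).symm
    refine le_trans (le_of_eq ?_) hFge
    rw [← ENNReal.ofReal_toReal hvlt, ← hvr, ← ENNReal.ofReal_mul (by positivity),
      ← ENNReal.ofReal_mul (by positivity)]
    congr 1
    have hexp : (r:ℝ)^(n:ℕ) * (r ^ (-(n:ℝ)/p) * r ^ (-lam)) = r ^ (-(m:ℝ)/q) := by
      rw [← Real.rpow_natCast r n, ← Real.rpow_add hx0, ← Real.rpow_add hx0]
      congr 1
      rw [hhom]
      field_simp
      ring
    rw [hc, hK, hB, ← hexp]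
    ring
  have part2 : (∃ c : ℝ, 0 < c ∧ ∃ δ : ℝ, 0 < δ ∧ ∀ x : E m, 0 < ‖x‖ → ‖x‖ ≤ δ →
      ENNReal.ofReal (c * ‖x‖ ^ (-(m : ℝ)/q) * Real.log (1/‖x‖) ^ (-(1+ε)/p)) ≤ F x) :=
    ⟨c, hcpos, 1/4, by norm_num, hlow⟩

  refine ⟨part1, part2, ?_⟩
  -- Part 3
  set s : ℝ := q * (1+ε) / p with hs
  have hs0 : 0 < s := by positivity
  have h1s : 0 < 1 - s := by rw [hs] at *; linarith
  have hcq : 0 < c ^ q := Real.rpow_pos_of_pos hcpos q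
  set h : ℝ → ℝ≥0∞ := fun r => if r ≤ 1/4 then
      ENNReal.ofReal (c * r ^ (-(m:ℝ)/q) * Real.log (1/r) ^ (-(1+ε)/p)) ^ q else 0 with hh
  have hhmeas : Measurable h := by
    apply Measurable.ite (measurableSet_le measurable_id measurable_const) _ measurable_const
    apply Measurable.pow_const
    apply Measurable.ennreal_ofReal
    have hlm : Measurable fun r : ℝ => Real.log (1/r) :=
      Real.measurable_log.comp (by fun_prop)
    fun_prop
  have hle : ∀ x : E m, h ‖x‖ ≤ F x ^ q := by
    intro x
    rw [hh]
    by_cases hx4 : ‖x‖ ≤ 1/4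
    · simp only [if_pos hx4]
      rcases eq_or_lt_of_le (norm_nonneg x) with h0 | h0
      · have hz : c * ‖x‖ ^ (-(m:ℝ)/q) * Real.log (1/‖x‖) ^ (-(1+ε)/p) = 0 := by
          rw [← h0, Real.zero_rpow (show -(m:ℝ)/q ≠ 0 by
            apply div_ne_zero _ hq0.ne'
            simpa using hm.ne')]
          ring
        rw [hz]
        simp [ENNReal.zero_rpow_of_pos hq0]
      · exact ENNReal.rpow_le_rpow (hlow x h0 hx4) hq0.le
    · simp only [if_neg hx4]
      positivity
  have hmain : ∫⁻ x : E m, h ‖x‖ ∂volume ≤ ∫⁻ x : E m, F x ^ q ∂volume := lintegral_mono hle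
  rw [lintegral_fun_norm_addHaar' volume h hhmeas, finrank_euclideanSpace_fin] at hmain
  set I : ℝ≥0∞ := ∫⁻ r in Set.Ioi (0:ℝ), ENNReal.ofReal (r ^ (m-1)) * h r with hI
  have hIeq : I = ⊤ := by
    by_contra hItop
    have hbound : ∀ a : ℝ, 0 < a → a ≤ 1/8 →
        c^q * ((1-s)⁻¹ * (Real.log (1/a) ^ (1-s) - Real.log (1/(1/4:ℝ)) ^ (1-s)))
          ≤ I.toReal := by
      intro a ha0 ha8
      have hstep : ∫⁻ r in Set.Ioc a (1/4:ℝ), ENNReal.ofReal (r ^ (m-1)) * h r ≤ I := by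
        rw [hI]
        exact lintegral_mono_set (fun r hr => ha0.trans hr.1)
      have hcong : ∫⁻ r in Set.Ioc a (1/4:ℝ), ENNReal.ofReal (r ^ (m-1)) * h r =
          ∫⁻ r in Set.Ioc a (1/4:ℝ),
            ENNReal.ofReal (c^q) * ENNReal.ofReal (r⁻¹ * Real.log (1/r) ^ (-s)) := by
        refine setLIntegral_congr_fun measurableSet_Ioc
          (fun r hr => ?_)
        have hr0 : 0 < r := ha0.trans hr.1
        have hL : 0 < Real.log (1/r) :=
          Real.log_pos (one_lt_one_div hr0 (lt_of_le_of_lt hr.2 (by norm_num)))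
        rw [hh]
        simp only [if_pos hr.2]
        have hApos : 0 < c * r ^ (-(m:ℝ)/q) * Real.log (1/r) ^ (-(1+ε)/p) := by positivity
        rw [ENNReal.ofReal_rpow_of_pos hApos, ← ENNReal.ofReal_mul (by positivity),
          ← ENNReal.ofReal_mul (by positivity)]
        congr 1
        rw [Real.mul_rpow (by positivity) (Real.rpow_pos_of_pos hL _).le,
          Real.mul_rpow hcpos.le (Real.rpow_pos_of_pos hr0 _).le,
          ← Real.rpow_mul hr0.le, ← Real.rpow_mul hL.le,
          div_mul_cancel₀ _ hq0.ne']
        have hLe : (-(1+ε)/p) * q = -s := by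
          rw [hs]
          field_simp
        rw [hLe]
        rw [show (r:ℝ)^(m-1) * (c^q * r^(-(m:ℝ)) * Real.log (1/r) ^ (-s)) =
          c^q * (((r:ℝ)^(m-1) * r^(-(m:ℝ))) * Real.log (1/r) ^ (-s)) by ring,
          real_pow_helper hm hr0]
      rw [hcong, lintegral_const_mul' _ _ ENNReal.ofReal_ne_top,
        lint_Ioc_eq s (by linarith) ha0 (by linarith) (by norm_num),
        ← ENNReal.ofReal_mul (by positivity)] at hstep
      exact (ENNReal.ofReal_le_iff_le_toReal hItop).mp hstep
    set T : ℝ := I.toReal with hT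
    set D : ℝ := Real.log (1/(1/4:ℝ)) ^ (1-s) with hD
    set Y : ℝ := T * (1-s) / c^q + D with hY
    have hmY : 0 < max Y 0 + 1 := by
      have := le_max_right Y 0
      linarith
    set Bv : ℝ := (max Y 0 + 1) ^ (1-s)⁻¹ with hBv
    have hBvpos : 0 < Bv := Real.rpow_pos_of_pos hmY _
    set a : ℝ := min (1/8) (Real.exp (-Bv)) with ha
    have ha0 : 0 < a := lt_min (by norm_num) (Real.exp_pos _)
    have ha8 : a ≤ 1/8 := min_le_left _ _
    have hXa : max Y 0 + 1 ≤ Real.log (1/a) ^ (1-s) := by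
      have h1 : a ≤ Real.exp (-Bv) := min_le_right _ _
      have h2 : Bv ≤ Real.log (1/a) := by
        rw [one_div, Real.log_inv]
        have h3 := Real.log_le_log ha0 h1
        rw [Real.log_exp] at h3
        linarith
      calc max Y 0 + 1 = Bv ^ (1-s) :=
            (Real.rpow_inv_rpow hmY.le (ne_of_gt h1s)).symm
        _ ≤ Real.log (1/a) ^ (1-s) := Real.rpow_le_rpow hBvpos.le h2 h1s.le
    have hcontr := hbound a ha0 ha8
    have hX : T * (1-s)/c^q + 1 ≤ Real.log (1/a) ^ (1-s) - D := by
      have := le_max_left Y 0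
      rw [hY] at *
      linarith
    have hgt : T < c^q * ((1-s)⁻¹ * (Real.log (1/a) ^ (1-s) - D)) := by
      have h3 : c^q * ((1-s)⁻¹ * (T*(1-s)/c^q + 1)) = T + c^q * (1-s)⁻¹ := by
        field_simp
      calc T < T + c^q * (1-s)⁻¹ := lt_add_of_pos_right _ (by positivity)
        _ = c^q * ((1-s)⁻¹ * (T*(1-s)/c^q + 1)) := h3.symm
        _ ≤ c^q * ((1-s)⁻¹ * (Real.log (1/a) ^ (1-s) - D)) := by
            apply mul_le_mul_of_nonneg_left _ hcq.le
            apply mul_le_mul_of_nonneg_left _ (by positivity)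
            linarith
    linarith
  rw [hIeq, ENNReal.mul_top (by
    exact mul_ne_zero (by simpa using hm.ne')
      (Metric.measure_ball_pos volume 0 one_pos).ne')] at hmain
  exact top_le_iff.mp hmain
end

section
/- Suppose the bilinear operator I_{λ,D}(f₁,f₂)(x) = ∫_{ℝ^{n₁+n₂}} f₁(y₁)f₂(y₂)(|D₁x−y₁|+|D₂x−y₂|)^{−λ} dy₁dy₂ satisfies ‖I_{λ,D}(f₁,f₂)‖_{L^q(ℝ^m)} ≲ ‖f₁‖_{L^{p₁}}‖f₂‖_{L^{p₂}} for some 0 < p₁, p₂, q ≤ ∞ and 0 < λ < n₁+n₂, with the estimate not identically trivial. Then λ = n₁/p₁' + n₂/p₂' + m/q. -/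
open MeasureTheory ENNReal

noncomputable def smulEquiv (n : ℕ) {a : ℝ} (ha : 0 < a) : E n ≃ᵐ E n where
  toFun := (a • ·)
  invFun := (a⁻¹ • ·)
  left_inv := fun x => by simp [smul_smul, inv_mul_cancel₀ ha.ne']
  right_inv := fun x => by simp [smul_smul, mul_inv_cancel₀ ha.ne']
  measurable_toFun := measurable_const_smul a
  measurable_invFun := measurable_const_smul a⁻¹

lemma map_smulEquiv_vol (n : ℕ) {a : ℝ} (ha : 0 < a) :
    Measure.map (⇑(smulEquiv n ha)) (volume : Measure (E n))
      = ENNReal.ofReal ((a ^ n)⁻¹) • volume := by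
  have h : ⇑(smulEquiv n ha) = (a • ·) := rfl
  rw [h, Measure.map_addHaar_smul volume ha.ne']
  congr 1
  rw [finrank_euclideanSpace_fin, abs_of_nonneg (by positivity)]

lemma lintegral_dilate (n : ℕ) {a : ℝ} (ha : 0 < a) (φ : E n → ℝ≥0∞) :
    ∫⁻ y, φ (a⁻¹ • y) = ENNReal.ofReal (a ^ n) * ∫⁻ z, φ z := by
  have h2 : ∫⁻ y, φ (a⁻¹ • y) ∂(Measure.map (⇑(smulEquiv n ha)) volume)
      = ∫⁻ z, φ z := by
    rw [MeasureTheory.lintegral_map_equiv]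
    congr 1; ext z
    simp only [smulEquiv, MeasurableEquiv.coe_mk, Equiv.coe_fn_mk, smul_smul,
      inv_mul_cancel₀ ha.ne', one_smul]
  rw [map_smulEquiv_vol n ha, lintegral_smul_measure, smul_eq_mul] at h2
  rw [← h2, ← mul_assoc, ← ENNReal.ofReal_mul (by positivity),
    mul_inv_cancel₀ (by positivity), ENNReal.ofReal_one, one_mul]

lemma eLpNorm_dilate {n : ℕ} {a : ℝ} (ha : 0 < a) (f : E n → ℝ) (p : ℝ≥0∞) :
    eLpNorm (fun y => f (a⁻¹ • y)) p volume
      = ENNReal.ofReal (a ^ n) ^ (1/p).toReal * eLpNorm f p volume := by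
  have he : ⇑(smulEquiv n (inv_pos.2 ha)) = fun y : E n => a⁻¹ • y := rfl
  have h1 := (smulEquiv n (inv_pos.2 ha)).measurableEmbedding.eLpNorm_map_measure
    (g := f) (p := p) (μ := (volume : Measure (E n)))
  rw [map_smulEquiv_vol n (inv_pos.2 ha), inv_pow, inv_inv] at h1
  rw [he] at h1
  rw [show (fun y : E n => f (a⁻¹ • y)) = f ∘ (fun y : E n => a⁻¹ • y) from rfl, ← h1,
    eLpNorm_smul_measure_of_ne_zero (ENNReal.ofReal_pos.2 (pow_pos ha n)).ne', smul_eq_mul]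

lemma memℒp_dilate {n : ℕ} {a : ℝ} (ha : 0 < a) {f : E n → ℝ} {p : ℝ≥0∞}
    (hf : MemLp f p volume) : MemLp (fun y => f (a⁻¹ • y)) p volume := by
  have h1 := (smulEquiv n (inv_pos.2 ha)).memLp_map_measure_iff (g := f) (p := p)
    (μ := (volume : Measure (E n)))
  rw [map_smulEquiv_vol n (inv_pos.2 ha), inv_pow, inv_inv] at h1
  exact h1.mp (hf.smul_measure ENNReal.ofReal_ne_top)

lemma essSup_dilate {n : ℕ} {a : ℝ} (ha : 0 < a) (F : E n → ℝ≥0∞) :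
    essSup (fun x => F (a⁻¹ • x)) (volume : Measure (E n)) = essSup F volume := by
  have he : ⇑(smulEquiv n (inv_pos.2 ha)) = fun y : E n => a⁻¹ • y := rfl
  have h1 := (smulEquiv n (inv_pos.2 ha)).measurableEmbedding.essSup_map_measure
    (g := F) (μ := (volume : Measure (E n)))
  rw [map_smulEquiv_vol n (inv_pos.2 ha), inv_pow, inv_inv, he,
    essSup_ennreal_smul_measure (by simp [pow_pos ha])] at h1
  exact h1.symm

lemma qnorm_dilate {n : ℕ} {a : ℝ} (ha : 0 < a) {q : ℝ≥0∞} (hq : q ≠ 0)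
    {c : ℝ≥0∞} (hc : c ≠ ∞) (F : E n → ℝ≥0∞) :
    qnorm volume q (fun x => c * F (a⁻¹ • x))
      = c * ENNReal.ofReal (a ^ n) ^ (1/q).toReal * qnorm volume q F := by
  rcases eq_or_ne q ⊤ with hqt | hqt
  · subst hqt
    simp only [qnorm, if_neg ENNReal.top_ne_zero, if_pos rfl]
    rw [essSup_const_mul, essSup_dilate ha]
    simp [mul_assoc]
  · have hq0 : 0 < q.toReal := ENNReal.toReal_pos hq hqt
    simp only [qnorm, if_neg hq, if_neg hqt]
    have step : ∀ x : E n, (c * F (a⁻¹ • x)) ^ q.toReal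
        = c ^ q.toReal * (F (a⁻¹ • x)) ^ q.toReal := fun x =>
      ENNReal.mul_rpow_of_nonneg _ _ hq0.le
    simp only [step]
    rw [lintegral_const_mul' _ _ (ENNReal.rpow_ne_top_of_nonneg hq0.le hc),
      lintegral_dilate n ha (fun z => F z ^ q.toReal),
      ENNReal.mul_rpow_of_nonneg _ _ (by positivity),
      ENNReal.mul_rpow_of_nonneg _ _ (by positivity),
      ← ENNReal.rpow_mul c, mul_one_div_cancel hq0.ne', ENNReal.rpow_one]
    rw [one_div, ← ENNReal.toReal_inv, one_div]
    ring

lemma mvec_smul {n m : ℕ} (D : Matrix (Fin n) (Fin m) ℝ) (a : ℝ) (x : E m) :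
    mvec D (a • x) = a • mvec D x := by
  unfold mvec
  rw [show ∀ v : E m, WithLp.equiv 2 (Fin m → ℝ) (a • v) = a • WithLp.equiv 2 (Fin m → ℝ) v from fun _ => rfl,
    Matrix.mulVec_smul, show ∀ v : Fin n → ℝ, (WithLp.equiv 2 (Fin n → ℝ)).symm (a • v)
      = a • (WithLp.equiv 2 (Fin n → ℝ)).symm v from fun _ => rfl]

lemma kernel_shift {n m : ℕ} (D : Matrix (Fin n) (Fin m) ℝ) {a : ℝ} (ha : 0 < a)
    (x : E m) (y : E n) :
    ‖mvec D x - y‖ = a * ‖mvec D (a⁻¹ • x) - a⁻¹ • y‖ := by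
  rw [mvec_smul, ← smul_sub, norm_smul, Real.norm_eq_abs,
    abs_of_nonneg (inv_nonneg.2 ha.le), ← mul_assoc, mul_inv_cancel₀ ha.ne', one_mul]

lemma I_dilate {n₁ n₂ m : ℕ} (lam : ℝ) (D₁ : Matrix (Fin n₁) (Fin m) ℝ)
    (D₂ : Matrix (Fin n₂) (Fin m) ℝ) {a : ℝ} (ha : 0 < a)
    (f₁ : E n₁ → ℝ) (f₂ : E n₂ → ℝ) (x : E m) :
    (∫⁻ y₁ : E n₁, ∫⁻ y₂ : E n₂,
        ENNReal.ofReal |f₁ (a⁻¹ • y₁)| * ENNReal.ofReal |f₂ (a⁻¹ • y₂)| *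
        ENNReal.ofReal ((‖mvec D₁ x - y₁‖ + ‖mvec D₂ x - y₂‖) ^ (-lam)) ∂volume ∂volume)
      = ENNReal.ofReal (a ^ n₁) * ENNReal.ofReal (a ^ n₂) * ENNReal.ofReal (a ^ (-lam)) *
        ∫⁻ z₁ : E n₁, ∫⁻ z₂ : E n₂,
        ENNReal.ofReal |f₁ z₁| * ENNReal.ofReal |f₂ z₂| *
        ENNReal.ofReal ((‖mvec D₁ (a⁻¹ • x) - z₁‖ + ‖mvec D₂ (a⁻¹ • x) - z₂‖) ^ (-lam))
          ∂volume ∂volume := by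
  have key : ∀ (z₁ : E n₁) (z₂ : E n₂),
      ENNReal.ofReal ((a * ‖mvec D₁ (a⁻¹ • x) - z₁‖ + a * ‖mvec D₂ (a⁻¹ • x) - z₂‖) ^ (-lam))
        = ENNReal.ofReal (a ^ (-lam)) *
          ENNReal.ofReal ((‖mvec D₁ (a⁻¹ • x) - z₁‖ + ‖mvec D₂ (a⁻¹ • x) - z₂‖) ^ (-lam)) := by
    intro z₁ z₂
    rw [← mul_add, Real.mul_rpow ha.le (by positivity), ENNReal.ofReal_mul (by positivity)]
  calc (∫⁻ y₁ : E n₁, ∫⁻ y₂ : E n₂,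
        ENNReal.ofReal |f₁ (a⁻¹ • y₁)| * ENNReal.ofReal |f₂ (a⁻¹ • y₂)| *
        ENNReal.ofReal ((‖mvec D₁ x - y₁‖ + ‖mvec D₂ x - y₂‖) ^ (-lam)) ∂volume ∂volume)
      = ∫⁻ y₁ : E n₁, (fun z₁ : E n₁ => ∫⁻ y₂ : E n₂,
          ENNReal.ofReal |f₁ z₁| * ENNReal.ofReal |f₂ (a⁻¹ • y₂)| *
          ENNReal.ofReal ((a * ‖mvec D₁ (a⁻¹ • x) - z₁‖ + ‖mvec D₂ x - y₂‖) ^ (-lam))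
            ∂volume) (a⁻¹ • y₁) ∂volume := by
        congr 1; ext y₁
        simp only [← kernel_shift D₁ ha x y₁]
    _ = ENNReal.ofReal (a ^ n₁) * ∫⁻ z₁ : E n₁, ∫⁻ y₂ : E n₂,
          ENNReal.ofReal |f₁ z₁| * ENNReal.ofReal |f₂ (a⁻¹ • y₂)| *
          ENNReal.ofReal ((a * ‖mvec D₁ (a⁻¹ • x) - z₁‖ + ‖mvec D₂ x - y₂‖) ^ (-lam))
            ∂volume ∂volume := lintegral_dilate n₁ ha (fun z₁ : E n₁ => ∫⁻ y₂ : E n₂,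
          ENNReal.ofReal |f₁ z₁| * ENNReal.ofReal |f₂ (a⁻¹ • y₂)| *
          ENNReal.ofReal ((a * ‖mvec D₁ (a⁻¹ • x) - z₁‖ + ‖mvec D₂ x - y₂‖) ^ (-lam)) ∂volume)
    _ = ENNReal.ofReal (a ^ n₁) * ∫⁻ z₁ : E n₁, ENNReal.ofReal (a ^ n₂) *
          ∫⁻ z₂ : E n₂,
          ENNReal.ofReal |f₁ z₁| * ENNReal.ofReal |f₂ z₂| *
          ENNReal.ofReal ((a * ‖mvec D₁ (a⁻¹ • x) - z₁‖ + a * ‖mvec D₂ (a⁻¹ • x) - z₂‖) ^ (-lam))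
            ∂volume ∂volume := by
        congr 1; congr 1; ext z₁
        rw [← lintegral_dilate n₂ ha (fun z₂ : E n₂ =>
          ENNReal.ofReal |f₁ z₁| * ENNReal.ofReal |f₂ z₂| *
          ENNReal.ofReal ((a * ‖mvec D₁ (a⁻¹ • x) - z₁‖ + a * ‖mvec D₂ (a⁻¹ • x) - z₂‖) ^ (-lam)))]
        congr 1; ext y₂
        simp only [← kernel_shift D₂ ha x y₂]
    _ = ENNReal.ofReal (a ^ n₁) * ENNReal.ofReal (a ^ n₂) * ENNReal.ofReal (a ^ (-lam)) *
        ∫⁻ z₁ : E n₁, ∫⁻ z₂ : E n₂,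
        ENNReal.ofReal |f₁ z₁| * ENNReal.ofReal |f₂ z₂| *
        ENNReal.ofReal ((‖mvec D₁ (a⁻¹ • x) - z₁‖ + ‖mvec D₂ (a⁻¹ • x) - z₂‖) ^ (-lam))
          ∂volume ∂volume := by
        rw [lintegral_const_mul' _ _ ENNReal.ofReal_ne_top, ← mul_assoc]
        simp only [key]
        rw [mul_assoc (ENNReal.ofReal (a ^ n₁) * ENNReal.ofReal (a ^ n₂))]
        congr 1
        rw [← lintegral_const_mul' _ _ ENNReal.ofReal_ne_top]
        congr 1; ext z₁
        rw [← lintegral_const_mul' _ _ ENNReal.ofReal_ne_top]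
        congr 1; ext z₂
        ring

lemma exponent_eq {K M : ℝ≥0∞} (hK : K ≠ 0) (hM : M ≠ ∞) {s t : ℝ}
    (h : ∀ a : ℝ, 0 < a → (ENNReal.ofReal a) ^ s * K ≤ (ENNReal.ofReal a) ^ t * M) :
    s = t := by
  by_contra hne
  have hKM : K ≤ M := by simpa using h 1 one_pos
  have hK' : K ≠ ∞ := (lt_of_le_of_lt hKM hM.lt_top).ne
  have hM0 : M ≠ 0 := fun h0 => hK (le_antisymm (h0 ▸ hKM) zero_le)
  have hKr : 0 < K.toReal := ENNReal.toReal_pos hK hK'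
  have hMr : 0 < M.toReal := ENNReal.toReal_pos hM0 hM
  set d : ℝ := t - s with hd_def
  have hd : d ≠ 0 := sub_ne_zero.2 (Ne.symm hne)
  set ρ : ℝ := K.toReal / (2 * M.toReal) with hρ_def
  have hρ : 0 < ρ := by positivity
  set a : ℝ := ρ ^ (1 / d) with ha_def
  have ha : 0 < a := Real.rpow_pos_of_pos hρ _
  have had : a ^ d = ρ := by
    rw [ha_def, ← Real.rpow_mul hρ.le, one_div, inv_mul_cancel₀ hd, Real.rpow_one]
  have ha0 : ENNReal.ofReal a ≠ 0 := by simp [ha]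
  have hat : ENNReal.ofReal a ≠ ⊤ := ENNReal.ofReal_ne_top
  have h2 := mul_le_mul_right (h a ha) ((ENNReal.ofReal a) ^ (-s))
  rw [← mul_assoc, ← ENNReal.rpow_add _ _ ha0 hat, neg_add_cancel, ENNReal.rpow_zero, one_mul,
    ← mul_assoc, ← ENNReal.rpow_add _ _ ha0 hat] at h2
  have h3 : K ≤ ENNReal.ofReal ρ * M := by
    rwa [show -s + t = d by rw [hd_def]; ring, ENNReal.ofReal_rpow_of_pos ha, had] at h2
  have h4 : ENNReal.ofReal ρ * M < K := by
    rw [← ENNReal.ofReal_toReal hM, ← ENNReal.ofReal_mul hρ.le,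
      show ρ * M.toReal = K.toReal / 2 by rw [hρ_def]; field_simp]
    calc ENNReal.ofReal (K.toReal / 2) < ENNReal.ofReal K.toReal :=
          ENNReal.ofReal_lt_ofReal_iff hKr |>.2 (by linarith)
      _ = K := ENNReal.ofReal_toReal hK'
  exact absurd h3 (not_le.2 h4)

/-- Necessity of the homogeneity condition: if the bilinear fractional integral
`I_{λ,D}` is bounded from `L^{p₁} × L^{p₂}` to `L^q` and is not identically
trivial, then `λ = n₁/p₁' + n₂/p₂' + m/q`. -/
theorem stmt12 (n₁ n₂ m : ℕ) (hn₁ : 0 < n₁) (hn₂ : 0 < n₂) (hm : 0 < m)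
    (lam : ℝ) (p₁ p₂ q : ℝ≥0∞) (hp₁ : 0 < p₁) (hp₂ : 0 < p₂) (hq : 0 < q)
    (hlam0 : 0 < lam) (hlamn : lam < n₁ + n₂)
    (D₁ : Matrix (Fin n₁) (Fin m) ℝ) (D₂ : Matrix (Fin n₂) (Fin m) ℝ) (C : ℝ)
    (I : (E n₁ → ℝ) → (E n₂ → ℝ) → E m → ℝ≥0∞)
    (hI : ∀ f₁ f₂ x, I f₁ f₂ x = ∫⁻ y₁ : E n₁, ∫⁻ y₂ : E n₂,
        ENNReal.ofReal |f₁ y₁| * ENNReal.ofReal |f₂ y₂| *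
        ENNReal.ofReal ((‖mvec D₁ x - y₁‖ + ‖mvec D₂ x - y₂‖) ^ (-lam)) ∂volume ∂volume)
    (hbound : ∀ f₁ f₂, MemLp f₁ p₁ volume → MemLp f₂ p₂ volume →
      qnorm volume q (I f₁ f₂) ≤ ENNReal.ofReal C * eLpNorm f₁ p₁ volume * eLpNorm f₂ p₂ volume)
    (hnontriv : ∃ f₁ f₂, MemLp f₁ p₁ volume ∧ MemLp f₂ p₂ volume ∧
      qnorm volume q (I f₁ f₂) ≠ 0) :
    lam = n₁ * (1 - (1/p₁).toReal) + n₂ * (1 - (1/p₂).toReal) + m * (1/q).toReal := by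
  obtain ⟨f₁, f₂, hf₁, hf₂, hKne⟩ := hnontriv
  set N₁ := eLpNorm f₁ p₁ volume with hN₁
  set N₂ := eLpNorm f₂ p₂ volume with hN₂
  set M := ENNReal.ofReal C * N₁ * N₂ with hM_def
  have hMt : M ≠ ∞ :=
    ENNReal.mul_ne_top (ENNReal.mul_ne_top ENNReal.ofReal_ne_top hf₁.2.ne) hf₂.2.ne
  set r₁ := (1/p₁).toReal with hr₁
  set r₂ := (1/p₂).toReal with hr₂
  set rq := (1/q).toReal with hrq
  have key : ∀ a : ℝ, 0 < a →
      (ENNReal.ofReal a) ^ ((n₁:ℝ) + n₂ - lam + m * rq) * qnorm volume q (I f₁ f₂)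
        ≤ (ENNReal.ofReal a) ^ ((n₁:ℝ) * r₁ + n₂ * r₂) * M := by
    intro a ha
    have ha0 : ENNReal.ofReal a ≠ 0 := by simp [ha]
    have hat : ENNReal.ofReal a ≠ ⊤ := ENNReal.ofReal_ne_top
    set c : ℝ≥0∞ := ENNReal.ofReal (a ^ n₁) * ENNReal.ofReal (a ^ n₂) *
      ENNReal.ofReal (a ^ (-lam)) with hc_def
    have hc : c ≠ ∞ :=
      ENNReal.mul_ne_top (ENNReal.mul_ne_top ENNReal.ofReal_ne_top ENNReal.ofReal_ne_top)
        ENNReal.ofReal_ne_top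
    have hfun : I (fun y => f₁ (a⁻¹ • y)) (fun y => f₂ (a⁻¹ • y))
        = fun x => c * (I f₁ f₂) (a⁻¹ • x) := by
      funext x
      rw [hI, I_dilate lam D₁ D₂ ha f₁ f₂ x, hI]
    have h1 := hbound _ _ (memℒp_dilate ha hf₁) (memℒp_dilate ha hf₂)
    rw [hfun, qnorm_dilate ha hq.ne' hc (I f₁ f₂), eLpNorm_dilate ha f₁ p₁,
      eLpNorm_dilate ha f₂ p₂] at h1
    have hpow : ∀ k : ℕ, ENNReal.ofReal (a ^ k) = (ENNReal.ofReal a) ^ (k:ℝ) := fun k => by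
      rw [← Real.rpow_natCast a k, ← ENNReal.ofReal_rpow_of_pos ha]
    have hlam' : ENNReal.ofReal (a ^ (-lam)) = (ENNReal.ofReal a) ^ (-lam) :=
      (ENNReal.ofReal_rpow_of_pos ha).symm
    rw [hc_def, hpow n₁, hpow n₂, hpow m, hlam'] at h1
    rw [← ENNReal.rpow_mul, ← ENNReal.rpow_mul, ← ENNReal.rpow_mul] at h1
    calc (ENNReal.ofReal a) ^ ((n₁:ℝ) + n₂ - lam + m * rq) * qnorm volume q (I f₁ f₂)
        = (ENNReal.ofReal a) ^ (n₁:ℝ) * (ENNReal.ofReal a) ^ (n₂:ℝ) *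
            (ENNReal.ofReal a) ^ (-lam) * (ENNReal.ofReal a) ^ ((m:ℝ) * rq) *
            qnorm volume q (I f₁ f₂) := by
          rw [← ENNReal.rpow_add _ _ ha0 hat, ← ENNReal.rpow_add _ _ ha0 hat,
            ← ENNReal.rpow_add _ _ ha0 hat, sub_eq_add_neg]
      _ ≤ ENNReal.ofReal C * ((ENNReal.ofReal a) ^ ((n₁:ℝ) * r₁) * N₁) *
            ((ENNReal.ofReal a) ^ ((n₂:ℝ) * r₂) * N₂) := by
          rw [mul_assoc (_ * _ * _)] at h1 ⊢
          exact h1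
      _ = (ENNReal.ofReal a) ^ ((n₁:ℝ) * r₁ + n₂ * r₂) * M := by
          rw [ENNReal.rpow_add _ _ ha0 hat, hM_def]
          ring
  have hst := exponent_eq hKne hMt key
  have hf : (n₁:ℝ) + n₂ - lam + m * rq = n₁ * r₁ + n₂ * r₂ := hst
  linarith
end

section
/- Let 0 < λ < n₁ + n₂ with λ = m/q and 0 < q < ∞ (corresponding to p₁ = p₂ = 1). Set f_i = χ_{\{|y_i| ≤ 1\}} on ℝ^{n_i}. Then for all x ∈ ℝ^m, ∫_{ℝ^{n₁+n₂}} f₁(y₁)f₂(y₂)(|D₁x−y₁|+|D₂x−y₂|)^{−λ} dy₁dy₂ ≳ (1+|x|)^{−λ}, and hence this function is not in L^q(ℝ^m). Consequently I_{λ,D} is never bounded from L¹(ℝ^{n₁}) × L¹(ℝ^{n₂}) to L^q(ℝ^m). -/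
open MeasureTheory ENNReal

open Metric Set Module

section Aux

variable {V : Type*} [NormedAddCommGroup V] [NormedSpace ℝ V] [MeasurableSpace V]
  [BorelSpace V] [FiniteDimensional ℝ V] (μ : Measure V) [μ.IsAddHaarMeasure]

/-- `‖z - v‖ ^ (-lam)` is integrable on balls when `lam < dim`. -/
lemma aux_integrableOn (v : V) {lam : ℝ} (hlam0 : 0 < lam)
    (hlamn : lam < finrank ℝ V) (R : ℝ) :
    IntegrableOn (fun z : V => ‖z - v‖ ^ (-lam)) (closedBall v R) μ := by
  have h_meas : Measurable fun z : V => ‖z - v‖ ^ (-lam) := by fun_prop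
  have h_nn : ∀ z : V, 0 ≤ ‖z - v‖ ^ (-lam) := fun z => Real.rpow_nonneg (norm_nonneg _) _
  constructor
  · exact h_meas.aestronglyMeasurable.restrict
  · rw [hasFiniteIntegral_iff_ofReal (Filter.Eventually.of_forall h_nn)]
    rw [lintegral_eq_lintegral_meas_le _ (Filter.Eventually.of_forall h_nn)
      h_meas.aemeasurable.restrict]
    have key : ∀ t ∈ Ioi (1:ℝ), (μ.restrict (closedBall v R)) {a : V | t ≤ ‖a - v‖ ^ (-lam)} ≤
        ENNReal.ofReal (t ^ ((-lam)⁻¹ * finrank ℝ V)) * μ (ball 0 1) := by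
      intro t ht
      have ht1 : (0:ℝ) < t := lt_trans one_pos ht
      have hsub : {a : V | t ≤ ‖a - v‖ ^ (-lam)} ⊆ closedBall v (t ^ (-lam)⁻¹) := by
        intro a ha
        simp only [mem_setOf_eq] at ha
        have hna : 0 < ‖a - v‖ := by
          rcases eq_or_lt_of_le (norm_nonneg (a - v)) with h | h
          · rw [← h, Real.zero_rpow (neg_ne_zero.2 hlam0.ne')] at ha; linarith
          · exact h
        rw [mem_closedBall, dist_eq_norm]
        exact (Real.le_rpow_inv_iff_of_neg hna ht1 (neg_lt_zero.2 hlam0)).mpr ha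
      calc (μ.restrict (closedBall v R)) {a : V | t ≤ ‖a - v‖ ^ (-lam)}
          ≤ μ {a : V | t ≤ ‖a - v‖ ^ (-lam)} := Measure.restrict_le_self _
        _ ≤ μ (closedBall v (t ^ (-lam)⁻¹)) := measure_mono hsub
        _ = ENNReal.ofReal ((t ^ (-lam)⁻¹) ^ finrank ℝ V) * μ (ball 0 1) :=
            μ.addHaar_closedBall v (Real.rpow_nonneg ht1.le _)
        _ = ENNReal.ofReal (t ^ ((-lam)⁻¹ * finrank ℝ V)) * μ (ball 0 1) := by
            rw [← Real.rpow_natCast (t ^ (-lam)⁻¹) (finrank ℝ V), ← Real.rpow_mul ht1.le]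
    calc ∫⁻ t in Ioi (0:ℝ), (μ.restrict (closedBall v R)) {a : V | t ≤ ‖a - v‖ ^ (-lam)}
        ≤ ∫⁻ t in Ioc (0:ℝ) 1 ∪ Ioi 1,
            (μ.restrict (closedBall v R)) {a : V | t ≤ ‖a - v‖ ^ (-lam)} :=
          lintegral_mono_set Ioi_subset_Ioc_union_Ioi
      _ ≤ (∫⁻ t in Ioc (0:ℝ) 1, (μ.restrict (closedBall v R)) {a : V | t ≤ ‖a - v‖ ^ (-lam)})
          + ∫⁻ t in Ioi (1:ℝ), (μ.restrict (closedBall v R)) {a : V | t ≤ ‖a - v‖ ^ (-lam)} :=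
          lintegral_union_le _ _ _
      _ < ⊤ := by
          apply ENNReal.add_lt_top.2
          constructor
          · calc ∫⁻ t in Ioc (0:ℝ) 1, (μ.restrict (closedBall v R)) {a : V | t ≤ ‖a - v‖ ^ (-lam)}
                ≤ ∫⁻ _t in Ioc (0:ℝ) 1, μ (closedBall v R) := by
                  apply lintegral_mono
                  intro t
                  calc (μ.restrict (closedBall v R)) {a : V | t ≤ ‖a - v‖ ^ (-lam)}
                      ≤ (μ.restrict (closedBall v R)) univ := measure_mono (subset_univ _)
                    _ = μ (closedBall v R) := by
                        rw [Measure.restrict_apply_univ]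
              _ = μ (closedBall v R) * volume (Ioc (0:ℝ) 1) := setLIntegral_const _ _
              _ < ⊤ := ENNReal.mul_lt_top measure_closedBall_lt_top (measure_Ioc_lt_top)
          · calc ∫⁻ t in Ioi (1:ℝ), (μ.restrict (closedBall v R)) {a : V | t ≤ ‖a - v‖ ^ (-lam)}
                ≤ ∫⁻ t in Ioi (1:ℝ),
                    ENNReal.ofReal (t ^ ((-lam)⁻¹ * finrank ℝ V)) * μ (ball 0 1) :=
                  setLIntegral_mono' measurableSet_Ioi key
              _ = (∫⁻ t in Ioi (1:ℝ), ENNReal.ofReal (t ^ ((-lam)⁻¹ * finrank ℝ V)))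
                    * μ (ball 0 1) := lintegral_mul_const' _ _ measure_ball_lt_top.ne
              _ < ⊤ := by
                  apply ENNReal.mul_lt_top ?_ measure_ball_lt_top
                  apply IntegrableOn.setLIntegral_lt_top
                  apply integrableOn_Ioi_rpow_of_lt ?_ one_pos
                  rw [← neg_inv, neg_mul]
                  have h1 : 1 < (finrank ℝ V : ℝ) / lam := (one_lt_div hlam0).mpr hlamn
                  rw [div_eq_inv_mul] at h1
                  linarith

/-- On `(0, ε]`, `∫ t⁻¹ dt = ∞`. -/
lemma aux_inv_top {ε : ℝ} (hε : 0 < ε) :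
    ∫⁻ t in Ioc (0:ℝ) ε, ENNReal.ofReal t⁻¹ = ⊤ := by
  by_contra h
  have hint : IntegrableOn (fun t : ℝ => t⁻¹) (Ioc 0 ε) := by
    constructor
    · exact measurable_inv.aestronglyMeasurable.restrict
    · rw [hasFiniteIntegral_iff_ofReal ?_]
      · exact lt_top_iff_ne_top.2 h
      · filter_upwards [ae_restrict_mem measurableSet_Ioc] with t ht using inv_nonneg.2 ht.1.le
  have h2 : IntegrableOn (fun t : ℝ => t ^ (-1:ℝ)) (Ioo 0 ε) := by
    simpa [Real.rpow_neg_one] using hint.mono Ioo_subset_Ioc_self le_rfl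
  exact absurd ((intervalIntegral.integrableOn_Ioo_rpow_iff hε).mp h2) (lt_irrefl _)

/-- `(1+‖x‖)^{-dim}` has infinite integral. -/
lemma aux_lintegral_top (hd : 0 < finrank ℝ V) :
    ∫⁻ x : V, ENNReal.ofReal ((1 + ‖x‖) ^ (-(finrank ℝ V : ℝ))) ∂μ = ⊤ := by
  have hn0 : (0:ℝ) < finrank ℝ V := by exact_mod_cast hd
  haveI : Nontrivial V := Module.nontrivial_of_finrank_pos hd
  set n : ℝ := (finrank ℝ V : ℝ) with hn
  have h_meas : Measurable fun x : V => (1 + ‖x‖) ^ (-n) := by fun_prop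
  have h_nn : ∀ x : V, 0 ≤ (1 + ‖x‖) ^ (-n) := fun x => Real.rpow_nonneg (by positivity) _
  rw [lintegral_eq_lintegral_meas_le μ (Filter.Eventually.of_forall h_nn) h_meas.aemeasurable]
  rw [eq_top_iff]
  set ε : ℝ := 2 ^ (-n) with hε
  have hε0 : 0 < ε := Real.rpow_pos_of_pos two_pos _
  have hεle : ∀ t ∈ Ioc (0:ℝ) ε,
      (ENNReal.ofReal ((2:ℝ)⁻¹ ^ finrank ℝ V) * μ (ball 0 1)) * ENNReal.ofReal t⁻¹
        ≤ μ {a : V | t ≤ (1 + ‖a‖) ^ (-n)} := by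
    intro t ht
    have ht0 : (0:ℝ) < t := ht.1
    have hset : {a : V | t ≤ (1 + ‖a‖) ^ (-n)} = closedBall 0 (t ^ (-n⁻¹) - 1) := by
      ext a
      simp only [mem_setOf_eq, mem_closedBall_zero_iff]
      exact le_rpow_one_add_norm_iff_norm_le hn0 ht0 a
    have hs2 : (2:ℝ) ≤ t ^ (-n⁻¹) := by
      have hmono : ε ^ (-n⁻¹) ≤ t ^ (-n⁻¹) :=
        Real.rpow_le_rpow_of_nonpos ht0 ht.2 (neg_nonpos.2 (inv_nonneg.2 hn0.le))
      calc (2:ℝ) = ε ^ (-n⁻¹) := by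
            rw [hε, ← Real.rpow_mul (by norm_num : (0:ℝ) ≤ 2)]
            rw [show (-n) * (-n⁻¹) = 1 by field_simp]
            exact (Real.rpow_one 2).symm
        _ ≤ t ^ (-n⁻¹) := hmono
    have hrad : t ^ (-n⁻¹) / 2 ≤ t ^ (-n⁻¹) - 1 := by linarith
    rw [hset]
    calc (ENNReal.ofReal ((2:ℝ)⁻¹ ^ finrank ℝ V) * μ (ball 0 1)) * ENNReal.ofReal t⁻¹
        = ENNReal.ofReal ((t ^ (-n⁻¹) / 2) ^ finrank ℝ V) * μ (ball 0 1) := by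
          rw [div_pow, div_eq_mul_inv, ← inv_pow]
          rw [show (t ^ (-n⁻¹)) ^ finrank ℝ V = t⁻¹ by
            rw [← Real.rpow_natCast (t ^ (-n⁻¹)) (finrank ℝ V), ← Real.rpow_mul ht0.le,
              ← hn, show (-n⁻¹) * n = -1 by field_simp, Real.rpow_neg_one]]
          rw [ENNReal.ofReal_mul (inv_nonneg.2 ht0.le)]
          ring
      _ = μ (closedBall (0:V) (t ^ (-n⁻¹) / 2)) := (μ.addHaar_closedBall 0 (by positivity)).symm
      _ ≤ μ (closedBall 0 (t ^ (-n⁻¹) - 1)) := measure_mono (closedBall_subset_closedBall hrad)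
  calc (⊤ : ℝ≥0∞)
      = (ENNReal.ofReal ((2:ℝ)⁻¹ ^ finrank ℝ V) * μ (ball 0 1))
          * ∫⁻ t in Ioc (0:ℝ) ε, ENNReal.ofReal t⁻¹ := by
        rw [aux_inv_top hε0, ENNReal.mul_top]
        refine (ENNReal.mul_pos ?_ ?_).ne'
        · exact (ENNReal.ofReal_pos.2 (by positivity)).ne'
        · exact (measure_ball_pos μ 0 one_pos).ne'
    _ = ∫⁻ t in Ioc (0:ℝ) ε,
          (ENNReal.ofReal ((2:ℝ)⁻¹ ^ finrank ℝ V) * μ (ball 0 1)) * ENNReal.ofReal t⁻¹ := by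
        rw [lintegral_const_mul' _ _
          (ENNReal.mul_ne_top ENNReal.ofReal_ne_top measure_ball_lt_top.ne)]
    _ ≤ ∫⁻ t in Ioc (0:ℝ) ε, μ {a : V | t ≤ (1 + ‖a‖) ^ (-n)} :=
        setLIntegral_mono' measurableSet_Ioc hεle
    _ ≤ ∫⁻ t in Ioi (0:ℝ), μ {a : V | t ≤ (1 + ‖a‖) ^ (-n)} :=
        lintegral_mono_set Ioc_subset_Ioi_self

end Aux

noncomputable def mvecCLM {n m : ℕ} (D : Matrix (Fin n) (Fin m) ℝ) : E m →L[ℝ] E n :=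
  LinearMap.toContinuousLinearMap <|
    (WithLp.linearEquiv 2 ℝ (Fin n → ℝ)).symm.toLinearMap ∘ₗ D.mulVecLin ∘ₗ
      (WithLp.linearEquiv 2 ℝ (Fin m → ℝ)).toLinearMap

lemma mvecCLM_apply {n m : ℕ} (D : Matrix (Fin n) (Fin m) ℝ) (x : E m) :
    mvecCLM D x = mvec D x := rfl


set_option maxHeartbeats 2000000 in
/-- The case `p₁ = p₂ = 1` always fails: with `λ = m/q`, `0 < q < ∞`,
`0 < λ < n₁+n₂` and `f_i = χ_{|y_i|≤1}`, the bilinear fractional integral of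
`(f₁,f₂)` is bounded below by a multiple of `(1+|x|)^{−λ}`, is not in `L^q(ℝ^m)`,
and consequently `I_{λ,D}` is not bounded from `L¹ × L¹` to `L^q`. -/
theorem stmt14 (n₁ n₂ m : ℕ) (hn₁ : 0 < n₁) (hn₂ : 0 < n₂) (hm : 0 < m)
    (lam q : ℝ) (hq0 : 0 < q) (hlam : lam = m / q)
    (hlam0 : 0 < lam) (hlamn : lam < n₁ + n₂)
    (D₁ : Matrix (Fin n₁) (Fin m) ℝ) (D₂ : Matrix (Fin n₂) (Fin m) ℝ) :
    (∃ c : ℝ, 0 < c ∧ ∀ x : E m, c * (1 + ‖x‖) ^ (-lam) ≤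
        ∫ y₁ : E n₁, ∫ y₂ : E n₂, (if ‖y₁‖ ≤ 1 then (1:ℝ) else 0) *
          (if ‖y₂‖ ≤ 1 then (1:ℝ) else 0) *
          (‖mvec D₁ x - y₁‖ + ‖mvec D₂ x - y₂‖) ^ (-lam) ∂volume ∂volume) ∧
    eLpNorm (fun x : E m =>
        ∫ y₁ : E n₁, ∫ y₂ : E n₂, (if ‖y₁‖ ≤ 1 then (1:ℝ) else 0) *
          (if ‖y₂‖ ≤ 1 then (1:ℝ) else 0) *
          (‖mvec D₁ x - y₁‖ + ‖mvec D₂ x - y₂‖) ^ (-lam) ∂volume ∂volume)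
      (ENNReal.ofReal q) volume = ⊤ ∧
    ¬ ∃ C : ℝ, ∀ (f₁ : E n₁ → ℝ) (f₂ : E n₂ → ℝ),
        MemLp f₁ 1 volume → MemLp f₂ 1 volume →
        eLpNorm (fun x : E m => ∫ y₁ : E n₁, ∫ y₂ : E n₂, f₁ y₁ * f₂ y₂ *
            (‖mvec D₁ x - y₁‖ + ‖mvec D₂ x - y₂‖) ^ (-lam) ∂volume ∂volume)
          (ENNReal.ofReal q) volume
          ≤ ENNReal.ofReal C * eLpNorm f₁ 1 volume * eLpNorm f₂ 1 volume := by
  classical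
  haveI : Nontrivial (E n₁) := by
    apply Module.nontrivial_of_finrank_pos (R := ℝ)
    rw [finrank_euclideanSpace_fin]; exact hn₁
  haveI : Nontrivial (E n₂) := by
    apply Module.nontrivial_of_finrank_pos (R := ℝ)
    rw [finrank_euclideanSpace_fin]; exact hn₂
  haveI : (volume : Measure (E n₁ × E n₂)).IsAddHaarMeasure :=
    MeasureTheory.Measure.prod.instIsAddHaarMeasure _ _
  have hfinProd : (finrank ℝ (E n₁ × E n₂) : ℝ) = (n₁ : ℝ) + n₂ := by
    rw [Module.finrank_prod, finrank_euclideanSpace_fin, finrank_euclideanSpace_fin]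
    push_cast; ring
  -- constants
  set M₁ : ℝ := ‖mvecCLM D₁‖ with hM₁
  set M₂ : ℝ := ‖mvecCLM D₂‖ with hM₂
  set C' : ℝ := M₁ + M₂ + 2 with hC'
  have hM₁0 : 0 ≤ M₁ := norm_nonneg _
  have hM₂0 : 0 ≤ M₂ := norm_nonneg _
  have hC'0 : 0 < C' := by rw [hC']; linarith
  set K₁ : Set (E n₁) := closedBall 0 1 with hK₁
  set K₂ : Set (E n₂) := closedBall 0 1 with hK₂
  have hvol₁ : 0 < (volume K₁).toReal :=
    ENNReal.toReal_pos (measure_closedBall_pos _ _ one_pos).ne' measure_closedBall_lt_top.ne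
  have hvol₂ : 0 < (volume K₂).toReal :=
    ENNReal.toReal_pos (measure_closedBall_pos _ _ one_pos).ne' measure_closedBall_lt_top.ne
  set c : ℝ := (volume K₁).toReal * (volume K₂).toReal * C' ^ (-lam) with hc_def
  have hc : 0 < c := by
    have := Real.rpow_pos_of_pos hC'0 (-lam)
    positivity
  -- Part 1
  have h1 : ∀ x : E m, c * (1 + ‖x‖) ^ (-lam) ≤
      ∫ y₁ : E n₁, ∫ y₂ : E n₂, (if ‖y₁‖ ≤ 1 then (1:ℝ) else 0) *
        (if ‖y₂‖ ≤ 1 then (1:ℝ) else 0) *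
        (‖mvec D₁ x - y₁‖ + ‖mvec D₂ x - y₂‖) ^ (-lam) ∂volume ∂volume := by
    intro x
    set a : E n₁ := mvec D₁ x with ha
    set b : E n₂ := mvec D₂ x with hb
    set F : E n₁ → E n₂ → ℝ := fun y₁ y₂ => (if ‖y₁‖ ≤ 1 then (1:ℝ) else 0) *
      (if ‖y₂‖ ≤ 1 then (1:ℝ) else 0) * (‖a - y₁‖ + ‖b - y₂‖) ^ (-lam) with hF
    have hFnn : ∀ y₁ y₂, 0 ≤ F y₁ y₂ := by
      intro y₁ y₂
      simp only [hF]
      apply mul_nonneg (mul_nonneg ?_ ?_) (Real.rpow_nonneg (by positivity) _) <;>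
        · split <;> norm_num
    set T : ℝ := C' * (1 + ‖x‖) with hT
    have hT0 : 0 < T := by rw [hT]; positivity
    have hsumT : ∀ y₁ ∈ K₁, ∀ y₂ ∈ K₂, ‖a - y₁‖ + ‖b - y₂‖ ≤ T := by
      intro y₁ hy₁ y₂ hy₂
      have h₁ : ‖a - y₁‖ ≤ M₁ * ‖x‖ + 1 := by
        calc ‖a - y₁‖ ≤ ‖a‖ + ‖y₁‖ := norm_sub_le _ _
          _ ≤ M₁ * ‖x‖ + 1 := by
              apply add_le_add
              · rw [ha, ← mvecCLM_apply]; exact (mvecCLM D₁).le_opNorm x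
              · exact mem_closedBall_zero_iff.1 hy₁
      have h₂ : ‖b - y₂‖ ≤ M₂ * ‖x‖ + 1 := by
        calc ‖b - y₂‖ ≤ ‖b‖ + ‖y₂‖ := norm_sub_le _ _
          _ ≤ M₂ * ‖x‖ + 1 := by
              apply add_le_add
              · rw [hb, ← mvecCLM_apply]; exact (mvecCLM D₂).le_opNorm x
              · exact mem_closedBall_zero_iff.1 hy₂
      have hx0 : 0 ≤ ‖x‖ := norm_nonneg x
      rw [hT, hC']
      nlinarith
    -- measurability of the uncurried function
    have hmeas : Measurable fun z : E n₁ × E n₂ => F z.1 z.2 := by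
      simp only [hF]
      apply Measurable.mul
      · apply Measurable.mul
        · exact Measurable.ite (measurableSet_le measurable_fst.norm measurable_const)
            measurable_const measurable_const
        · exact Measurable.ite (measurableSet_le measurable_snd.norm measurable_const)
            measurable_const measurable_const
      · fun_prop
    -- integrability of the uncurried function
    set c₀ : E n₁ × E n₂ := (a, b) with hc₀
    have hg : Integrable ((K₁ ×ˢ K₂).indicator
        fun z : E n₁ × E n₂ => ‖z - c₀‖ ^ (-lam)) volume := by
      rw [integrable_indicator_iff (measurableSet_closedBall.prod measurableSet_closedBall)]
      have hsub : K₁ ×ˢ K₂ ⊆ closedBall c₀ (1 + ‖c₀‖) := by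
        intro z hz
        rw [mem_closedBall, dist_eq_norm]
        calc ‖z - c₀‖ ≤ ‖z‖ + ‖c₀‖ := norm_sub_le _ _
          _ ≤ 1 + ‖c₀‖ := by
              refine add_le_add ?_ le_rfl
              rw [Prod.norm_def]
              exact max_le (mem_closedBall_zero_iff.1 hz.1) (mem_closedBall_zero_iff.1 hz.2)
      have hdim : lam < finrank ℝ (E n₁ × E n₂) := by
        rw [hfinProd]
        exact hlamn
      exact (aux_integrableOn volume c₀ hlam0 hdim (1 + ‖c₀‖)).mono_set hsub
    have hG : Integrable (fun z : E n₁ × E n₂ => F z.1 z.2) volume := by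
      refine hg.mono' hmeas.aestronglyMeasurable (Filter.Eventually.of_forall fun z => ?_)
      rw [Real.norm_of_nonneg (hFnn _ _)]
      by_cases hz : z ∈ K₁ ×ˢ K₂
      · rw [indicator_of_mem hz]
        simp only [hF]
        rw [if_pos (mem_closedBall_zero_iff.1 hz.1), if_pos (mem_closedBall_zero_iff.1 hz.2),
          one_mul, one_mul]
        have hle : ‖z - c₀‖ ≤ ‖a - z.1‖ + ‖b - z.2‖ := by
          rw [Prod.norm_def]
          have e1 : ‖(z - c₀).1‖ = ‖a - z.1‖ := by rw [hc₀]; simp [norm_sub_rev]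
          have e2 : ‖(z - c₀).2‖ = ‖b - z.2‖ := by rw [hc₀]; simp [norm_sub_rev]
          rw [e1, e2]
          exact max_le (le_add_of_nonneg_right (norm_nonneg _))
            (le_add_of_nonneg_left (norm_nonneg _))
        rcases eq_or_lt_of_le (norm_nonneg (z - c₀)) with h0 | h0
        · have hz0 : z = c₀ := by
            have h00 : ‖z - c₀‖ = 0 := h0.symm
            rwa [norm_eq_zero, sub_eq_zero] at h00
          rw [hz0]
          simp [hc₀]
        · exact Real.rpow_le_rpow_of_nonpos h0 hle (neg_nonpos.2 hlam0.le)
      · rw [indicator_of_notMem hz]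
        simp only [hF]
        rw [mem_prod] at hz
        push_neg at hz
        by_cases h1 : z.1 ∈ K₁
        · rw [if_neg (fun h => (hz h1) (mem_closedBall_zero_iff.2 h))]
          simp
        · rw [if_neg (fun h => h1 (mem_closedBall_zero_iff.2 h))]
          simp
    rw [Measure.volume_eq_prod] at hG
    have hInnerAE : ∀ᵐ y₁ : E n₁ ∂volume, Integrable (fun y₂ => F y₁ y₂) volume :=
      hG.prod_right_ae
    have hIntegr : Integrable (fun y₁ : E n₁ => ∫ y₂, F y₁ y₂ ∂volume) volume :=
      hG.integral_prod_left
    have haeNe : ∀ᵐ y₁ : E n₁ ∂volume, y₁ ≠ a := by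
      rw [ae_iff]
      have hset : {y : E n₁ | ¬y ≠ a} = {a} := by ext y; simp
      rw [hset]
      exact measure_singleton a
    set κ : ℝ := (volume K₂).toReal * T ^ (-lam) with hκ
    have hInner : ∀ᵐ y₁ : E n₁ ∂volume,
        K₁.indicator (fun _ => κ) y₁ ≤ ∫ y₂, F y₁ y₂ ∂volume := by
      filter_upwards [hInnerAE, haeNe] with y₁ hy₁int hy₁ne
      by_cases hy₁ : y₁ ∈ K₁
      · rw [indicator_of_mem hy₁]
        have hpt : ∀ y₂ : E n₂, K₂.indicator (fun _ => T ^ (-lam)) y₂ ≤ F y₁ y₂ := by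
          intro y₂
          by_cases hy₂ : y₂ ∈ K₂
          · rw [indicator_of_mem hy₂]
            simp only [hF]
            rw [if_pos (mem_closedBall_zero_iff.1 hy₁), if_pos (mem_closedBall_zero_iff.1 hy₂),
              one_mul, one_mul]
            have hpos : 0 < ‖a - y₁‖ + ‖b - y₂‖ := by
              have hp1 : 0 < ‖a - y₁‖ := by
                rw [norm_pos_iff, sub_ne_zero]
                exact fun h => hy₁ne h.symm
              linarith [norm_nonneg (b - y₂)]
            exact Real.rpow_le_rpow_of_nonpos hpos (hsumT y₁ hy₁ y₂ hy₂)
              (neg_nonpos.2 hlam0.le)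
          · rw [indicator_of_notMem hy₂]
            exact hFnn y₁ y₂
        have hind : Integrable (K₂.indicator fun _ : E n₂ => T ^ (-lam)) volume := by
          rw [integrable_indicator_iff measurableSet_closedBall]
          exact integrableOn_const measure_closedBall_lt_top.ne enorm_ne_top
        calc κ = ∫ y₂, K₂.indicator (fun _ => T ^ (-lam)) y₂ ∂volume := by
              rw [integral_indicator_const _ measurableSet_closedBall, smul_eq_mul, hκ, measureReal_def]
          _ ≤ ∫ y₂, F y₁ y₂ ∂volume := integral_mono hind hy₁int hpt
      · rw [indicator_of_notMem hy₁]
        exact integral_nonneg fun y₂ => hFnn y₁ y₂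
    have hIndK₁ : Integrable (K₁.indicator fun _ : E n₁ => κ) volume := by
      rw [integrable_indicator_iff measurableSet_closedBall]
      exact integrableOn_const measure_closedBall_lt_top.ne enorm_ne_top
    have houter : ∫ y₁, K₁.indicator (fun _ => κ) y₁ ∂volume
        ≤ ∫ y₁, ∫ y₂, F y₁ y₂ ∂volume ∂volume :=
      integral_mono_ae hIndK₁ hIntegr hInner
    have hLHS : ∫ y₁, K₁.indicator (fun _ => κ) y₁ ∂volume = (volume K₁).toReal * κ := by
      rw [integral_indicator_const _ measurableSet_closedBall, smul_eq_mul, measureReal_def]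
    have hfinal : c * (1 + ‖x‖) ^ (-lam) = (volume K₁).toReal * κ := by
      rw [hc_def, hκ, hT, Real.mul_rpow hC'0.le (by positivity)]
      ring
    calc c * (1 + ‖x‖) ^ (-lam) = (volume K₁).toReal * κ := hfinal
      _ ≤ ∫ y₁, ∫ y₂, F y₁ y₂ ∂volume ∂volume := hLHS ▸ houter
      _ = ∫ y₁ : E n₁, ∫ y₂ : E n₂, (if ‖y₁‖ ≤ 1 then (1:ℝ) else 0) *
          (if ‖y₂‖ ≤ 1 then (1:ℝ) else 0) *
          (‖a - y₁‖ + ‖b - y₂‖) ^ (-lam) ∂volume ∂volume := by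
          simp only [hF]
  -- Part 2
  have hfinm : finrank ℝ (E m) = m := finrank_euclideanSpace_fin
  have hp0 : (ENNReal.ofReal q) ≠ 0 := by
    simp only [ne_eq, ENNReal.ofReal_eq_zero, not_le]
    exact hq0
  have hptop : (ENNReal.ofReal q) ≠ ⊤ := ENNReal.ofReal_ne_top
  have h2 : eLpNorm (fun x : E m =>
      ∫ y₁ : E n₁, ∫ y₂ : E n₂, (if ‖y₁‖ ≤ 1 then (1:ℝ) else 0) *
        (if ‖y₂‖ ≤ 1 then (1:ℝ) else 0) *
        (‖mvec D₁ x - y₁‖ + ‖mvec D₂ x - y₂‖) ^ (-lam) ∂volume ∂volume)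
      (ENNReal.ofReal q) volume = ⊤ := by
    have hglow : eLpNorm (fun x : E m => c * (1 + ‖x‖) ^ (-lam)) (ENNReal.ofReal q) volume
        = ⊤ := by
      rw [eLpNorm_eq_lintegral_rpow_enorm_toReal hp0 hptop, ENNReal.toReal_ofReal hq0.le]
      have hptw : ∀ x : E m, (‖c * (1 + ‖x‖) ^ (-lam)‖ₑ) ^ q
          = ENNReal.ofReal (c ^ q)
            * ENNReal.ofReal ((1 + ‖x‖) ^ (-(finrank ℝ (E m) : ℝ))) := by
        intro x
        have h1x : (0:ℝ) < 1 + ‖x‖ := by positivity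
        rw [Real.enorm_eq_ofReal (by positivity)]
        rw [ENNReal.ofReal_rpow_of_nonneg (by positivity) hq0.le]
        rw [Real.mul_rpow hc.le (Real.rpow_nonneg h1x.le _)]
        rw [← Real.rpow_mul h1x.le]
        have hexp : -lam * q = -(finrank ℝ (E m) : ℝ) := by
          rw [hfinm, hlam]
          field_simp
        rw [hexp, ENNReal.ofReal_mul (by positivity)]
      have hint : ∫⁻ x : E m, (‖c * (1 + ‖x‖) ^ (-lam)‖ₑ) ^ q = ⊤ := by
        rw [lintegral_congr hptw, lintegral_const_mul' _ _ ENNReal.ofReal_ne_top,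
          aux_lintegral_top volume (by rw [hfinm]; exact hm),
          ENNReal.mul_top (ENNReal.ofReal_pos.2 (Real.rpow_pos_of_pos hc q)).ne']
      rw [hint]
      exact ENNReal.top_rpow_of_pos (by positivity)
    rw [eq_top_iff, ← hglow]
    apply eLpNorm_mono
    intro x
    have hg0 : 0 ≤ c * (1 + ‖x‖) ^ (-lam) := by positivity
    have hIx := h1 x
    rw [Real.norm_of_nonneg hg0, Real.norm_of_nonneg (le_trans hg0 hIx)]
    exact hIx
  refine ⟨⟨c, hc, h1⟩, h2, ?_⟩
  rintro ⟨C, hC⟩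
  have hmem₁ : MemLp (fun y : E n₁ => if ‖y‖ ≤ 1 then (1:ℝ) else 0) 1 volume := by
    have he : (fun y : E n₁ => if ‖y‖ ≤ 1 then (1:ℝ) else 0)
        = (closedBall (0:E n₁) 1).indicator fun _ => (1:ℝ) := by
      funext y
      simp [Set.indicator_apply, mem_closedBall_zero_iff]
    rw [he]
    exact memLp_indicator_const 1 measurableSet_closedBall 1 (Or.inr measure_closedBall_lt_top.ne)
  have hmem₂ : MemLp (fun y : E n₂ => if ‖y‖ ≤ 1 then (1:ℝ) else 0) 1 volume := by
    have he : (fun y : E n₂ => if ‖y‖ ≤ 1 then (1:ℝ) else 0)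
        = (closedBall (0:E n₂) 1).indicator fun _ => (1:ℝ) := by
      funext y
      simp [Set.indicator_apply, mem_closedBall_zero_iff]
    rw [he]
    exact memLp_indicator_const 1 measurableSet_closedBall 1 (Or.inr measure_closedBall_lt_top.ne)
  have hle := hC _ _ hmem₁ hmem₂
  rw [h2] at hle
  have hfin : ENNReal.ofReal C * eLpNorm (fun y : E n₁ => if ‖y‖ ≤ 1 then (1:ℝ) else 0) 1 volume
      * eLpNorm (fun y : E n₂ => if ‖y‖ ≤ 1 then (1:ℝ) else 0) 1 volume < ⊤ :=
    ENNReal.mul_lt_top (ENNReal.mul_lt_top ENNReal.ofReal_lt_top hmem₁.eLpNorm_lt_top)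
      hmem₂.eLpNorm_lt_top
  exact absurd (top_le_iff.mp hle) hfin.ne
end
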